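/- arXiv:1410.1114 — 6 statements merged into one kernel-verified Lean document; each statement's English description precedes it below -/
import Mathlib

section
/- Let 0 < m < M be real numbers, let f : [m,M] → ℝ be a continuous, concave, strictly positive function, and let Φ : B(H) → B(K) be a unital positive linear map between the algebras of bounded operators on complex Hilbert spaces (i.e. Φ(I) = I and Φ(X) ≥ 0 whenever X ≥ 0). Set μ_f = (f(M) − f(m))/(M − m), ν_f = (M f(m) − m f(M))/(M − m) and γ = max{ f(t)/(μ_f t + ν_f) : m ≤ t ≤ M }. Then for every self-adjoint operator A ∈ B(H) with spectrum contained in [m,M], one has γ·Φ(f(A)) ≥ f(Φ(A)). -/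
private lemma cfc_affine_aux {E : Type*} [NormedAddCommGroup E] [InnerProductSpace ℂ E]
    [CompleteSpace E] (c d : ℝ) (x : E →L[ℂ] E) (hx : IsSelfAdjoint x) :
    cfc (fun t : ℝ => c * t + d) x = c • x + algebraMap ℝ (E →L[ℂ] E) d := by
  rw [cfc_add x (fun t : ℝ => c * t) (fun _ : ℝ => d) (by fun_prop) (by fun_prop),
    cfc_const_mul_id c x hx, cfc_const d x hx]

/-- Mond–Pečarić: for a strictly positive concave function `f` on `[m, M]` and a unital
positive linear map `Φ` between algebras of bounded operators on complex Hilbert spaces,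
`γ · Φ(f(A)) ≥ f(Φ(A))` for every selfadjoint `A` with spectrum in `[m, M]`, where
`γ = max { f(t) / (μ_f t + ν_f) : m ≤ t ≤ M }`. -/
theorem mond_pecaric_reverse_jensen
    {H K : Type*} [NormedAddCommGroup H] [InnerProductSpace ℂ H] [CompleteSpace H]
    [NormedAddCommGroup K] [InnerProductSpace ℂ K] [CompleteSpace K]
    (m M : ℝ) (hm : 0 < m) (hmM : m < M)
    (f : ℝ → ℝ) (hf_cont : ContinuousOn f (Set.Icc m M))
    (hf_conc : ConcaveOn ℝ (Set.Icc m M) f)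
    (hf_pos : ∀ t ∈ Set.Icc m M, 0 < f t)
    (Φ : (H →L[ℂ] H) →ₗ[ℂ] (K →L[ℂ] K))
    (hΦ_unital : Φ 1 = 1)
    (hΦ_pos : ∀ X : H →L[ℂ] H, 0 ≤ X → 0 ≤ Φ X)
    (μf νf γ : ℝ)
    (hμ : μf = (f M - f m) / (M - m))
    (hν : νf = (M * f m - m * f M) / (M - m))
    (hγ : IsGreatest ((fun t => f t / (μf * t + νf)) '' Set.Icc m M) γ)
    (A : H →L[ℂ] H) (hA : IsSelfAdjoint A) (hspec : spectrum ℝ A ⊆ Set.Icc m M) :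
    cfc f (Φ A) ≤ γ • Φ (cfc f A) := by
  have hMm : (0 : ℝ) < M - m := by linarith
  have hne : M - m ≠ 0 := hMm.ne'
  have hfm := hf_pos m ⟨le_refl m, hmM.le⟩
  have hfM := hf_pos M ⟨hmM.le, le_refl M⟩
  have hLm : μf * m + νf = f m := by rw [hμ, hν]; field_simp; ring
  have hLM : μf * M + νf = f M := by rw [hμ, hν]; field_simp; ring
  -- positivity of the chord
  have hLpos : ∀ t ∈ Set.Icc m M, 0 < μf * t + νf := by
    intro t ht
    rcases le_or_gt 0 μf with h | h
    · nlinarith [mul_le_mul_of_nonneg_left ht.1 h]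
    · nlinarith [mul_le_mul_of_nonpos_left ht.2 h.le]
  -- the chord lies below `f`
  have hchord : ∀ t ∈ Set.Icc m M, μf * t + νf ≤ f t := by
    intro t ht
    have ha : (0:ℝ) ≤ (M - t) / (M - m) := div_nonneg (by linarith [ht.2]) hMm.le
    have hb : (0:ℝ) ≤ (t - m) / (M - m) := div_nonneg (by linarith [ht.1]) hMm.le
    have hab : (M - t) / (M - m) + (t - m) / (M - m) = 1 := by field_simp; ring
    have h := hf_conc.2 (Set.left_mem_Icc.mpr hmM.le) (Set.right_mem_Icc.mpr hmM.le) ha hb hab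
    have h1 : ((M - t) / (M - m)) • m + ((t - m) / (M - m)) • M = t := by
      simp only [smul_eq_mul]; field_simp; ring
    have h2 : ((M - t) / (M - m)) • f m + ((t - m) / (M - m)) • f M = μf * t + νf := by
      simp only [smul_eq_mul]; rw [hμ, hν]; field_simp; ring
    rw [h1, h2] at h
    exact h
  -- `f ≤ γ * chord`
  have hgam : ∀ t ∈ Set.Icc m M, f t ≤ γ * (μf * t + νf) := by
    intro t ht
    have h : f t / (μf * t + νf) ≤ γ := hγ.2 ⟨t, ht, rfl⟩
    calc f t = (f t / (μf * t + νf)) * (μf * t + νf) := by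
          field_simp [(hLpos t ht).ne']
      _ ≤ γ * (μf * t + νf) := mul_le_mul_of_nonneg_right h (hLpos t ht).le
  have hγ0 : 0 ≤ γ := by
    obtain ⟨t0, ht0, ht0e⟩ := hγ.1
    exact ht0e ▸ (div_pos (hf_pos t0 ht0) (hLpos t0 ht0)).le
  -- Φ is monotone
  have hmono : ∀ X Y : H →L[ℂ] H, X ≤ Y → Φ X ≤ Φ Y := by
    intro X Y h
    have := hΦ_pos (Y - X) (sub_nonneg.mpr h)
    rw [map_sub] at this
    exact sub_nonneg.mp this
  -- Φ fixes real scalars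
  have hΦalg : ∀ r : ℝ, Φ (algebraMap ℝ (H →L[ℂ] H) r) = algebraMap ℝ (K →L[ℂ] K) r := by
    intro r
    rw [Algebra.algebraMap_eq_smul_one, LinearMap.map_smul_of_tower, hΦ_unital,
      ← Algebra.algebraMap_eq_smul_one]
  -- bounds on A and Φ A
  have hmA : algebraMap ℝ (H →L[ℂ] H) m ≤ A :=
    algebraMap_le_of_le_spectrum (fun x hx => (hspec hx).1) hA
  have hAM : A ≤ algebraMap ℝ (H →L[ℂ] H) M :=
    le_algebraMap_of_spectrum_le (fun x hx => (hspec hx).2) hA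
  have h1 : algebraMap ℝ (K →L[ℂ] K) m ≤ Φ A := hΦalg m ▸ hmono _ _ hmA
  have h2 : Φ A ≤ algebraMap ℝ (K →L[ℂ] K) M := hΦalg M ▸ hmono _ _ hAM
  have hsaΦA : IsSelfAdjoint (Φ A) := by
    have h0 : (0 : K →L[ℂ] K) ≤ Φ A - algebraMap ℝ (K →L[ℂ] K) m := sub_nonneg.mpr h1
    have hsub := h0.isSelfAdjoint
    have halg : IsSelfAdjoint (algebraMap ℝ (K →L[ℂ] K) m) :=
      IsSelfAdjoint.algebraMap _ (IsSelfAdjoint.all m)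
    have hEq : Φ A = (Φ A - algebraMap ℝ (K →L[ℂ] K) m) + algebraMap ℝ (K →L[ℂ] K) m := by abel
    rw [hEq]
    exact hsub.add halg
  have hspecΦ : spectrum ℝ (Φ A) ⊆ Set.Icc m M := fun x hx =>
    ⟨(algebraMap_le_iff_le_spectrum hsaΦA).mp h1 x hx,
     (le_algebraMap_iff_spectrum_le hsaΦA).mp h2 x hx⟩
  -- continuity facts
  have hcontA : ContinuousOn f (spectrum ℝ A) := hf_cont.mono hspec
  have hcontΦ : ContinuousOn f (spectrum ℝ (Φ A)) := hf_cont.mono hspecΦ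
  -- main chain
  have key1 : cfc f (Φ A) ≤ cfc (fun t : ℝ => (γ * μf) * t + γ * νf) (Φ A) := by
    refine cfc_mono (fun x hx => ?_) hcontΦ (by fun_prop)
    have := hgam x (hspecΦ hx)
    nlinarith [this]
  have key2 : cfc (fun t : ℝ => (γ * μf) * t + γ * νf) A ≤ cfc (fun t : ℝ => γ * f t) A := by
    refine cfc_mono (fun x hx => ?_) (by fun_prop) (hcontA.const_smul γ)
    have h := mul_le_mul_of_nonneg_left (hchord x (hspec hx)) hγ0
    nlinarith [h]
  have eq1 : cfc (fun t : ℝ => (γ * μf) * t + γ * νf) A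
      = (γ * μf) • A + algebraMap ℝ (H →L[ℂ] H) (γ * νf) := cfc_affine_aux _ _ A hA
  have eq2 : Φ ((γ * μf) • A + algebraMap ℝ (H →L[ℂ] H) (γ * νf))
      = (γ * μf) • Φ A + algebraMap ℝ (K →L[ℂ] K) (γ * νf) := by
    rw [map_add, LinearMap.map_smul_of_tower, hΦalg]
  have eq3 : cfc (fun t : ℝ => (γ * μf) * t + γ * νf) (Φ A)
      = (γ * μf) • Φ A + algebraMap ℝ (K →L[ℂ] K) (γ * νf) := cfc_affine_aux _ _ (Φ A) hsaΦA
  have eq4 : cfc (fun t : ℝ => γ * f t) A = γ • cfc f A := cfc_const_mul γ f A hcontA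
  calc cfc f (Φ A) ≤ cfc (fun t : ℝ => (γ * μf) * t + γ * νf) (Φ A) := key1
    _ = Φ ((γ * μf) • A + algebraMap ℝ (H →L[ℂ] H) (γ * νf)) := by rw [eq2, eq3]
    _ = Φ (cfc (fun t : ℝ => (γ * μf) * t + γ * νf) A) := by rw [eq1]
    _ ≤ Φ (cfc (fun t : ℝ => γ * f t) A) := hmono _ _ key2
    _ = γ • Φ (cfc f A) := by rw [eq4, LinearMap.map_smul_of_tower]
end

section
/- Let 0 < m < M, let α ∈ (0,1), and let Φ : B(H) → B(K) be a unital positive linear map between the algebras of bounded operators on complex Hilbert spaces. Set μ = (M^α − m^α)/(M − m), ν = (M m^α − m M^α)/(M − m) and γ = max{ t^α/(μ t + ν) : m ≤ t ≤ M }. Then for all positive invertible operators A, B ∈ B(H) with mA ≤ B ≤ MA, one has γ·Φ(A ♯_α B) ≥ Φ(A) ♯_α Φ(B). -/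
variable {H : Type*} [NormedAddCommGroup H] [InnerProductSpace ℂ H] [CompleteSpace H]

/-- Real power `A^r` of a bounded operator, via the continuous functional calculus. -/
noncomputable def opRpow (A : H →L[ℂ] H) (r : ℝ) : H →L[ℂ] H :=
  cfc (fun x : ℝ => x ^ r) A

/-- The weighted operator geometric mean
`A ♯_μ B = A^{1/2} (A^{-1/2} B A^{-1/2})^μ A^{1/2}`. -/
noncomputable def wgm (μ : ℝ) (A B : H →L[ℂ] H) : H →L[ℂ] H :=
  opRpow A (1/2) * opRpow (opRpow A (-(1/2)) * B * opRpow A (-(1/2))) μ * opRpow A (1/2)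

set_option maxHeartbeats 1000000
set_option synthInstance.maxHeartbeats 400000

lemma rAndo.spec_pos {a : H →L[ℂ] H} (ha : 0 ≤ a) (hau : IsUnit a) :
    ∀ x ∈ spectrum ℝ a, 0 < x := by
  intro x hx
  rcases (spectrum_nonneg_of_nonneg ha hx).lt_or_eq with h | h
  · exact h
  · exact absurd (h ▸ hx) (spectrum.zero_notMem_iff ℝ |>.mpr hau)

lemma rAndo.key {m M α : ℝ} (hm : 0 < m) (hα : α ∈ Set.Ioo (0:ℝ) 1)
    (a b : H →L[ℂ] H) (ha : 0 ≤ a) (hau : IsUnit a) (hb : 0 ≤ b)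
    (h1 : m • a ≤ b) (h2 : b ≤ M • a)
    (μ' ν' g : ℝ)
    (hlow : ∀ t ∈ Set.Icc m M, μ' * t + ν' ≤ t ^ α)
    (hupp : ∀ t ∈ Set.Icc m M, t ^ α ≤ g * (μ' * t + ν')) :
    μ' • b + ν' • a ≤ wgm α a b ∧ wgm α a b ≤ g • (μ' • b + ν' • a) := by
  have hsa : IsSelfAdjoint a := .of_nonneg ha
  have hspa := rAndo.spec_pos ha hau
  set s := opRpow a (1/2) with hs
  set si := opRpow a (-(1/2)) with hsi
  have hssa : IsSelfAdjoint s := cfc_predicate _ a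
  have hsisa : IsSelfAdjoint si := cfc_predicate _ a
  have hconta : ∀ r : ℝ, ContinuousOn (fun x : ℝ => x ^ r) (spectrum ℝ a) := fun r x hx =>
    (Real.continuousAt_rpow_const x r (Or.inl (hspa x hx).ne')).continuousWithinAt
  have mul_rpow : ∀ r t : ℝ, opRpow a r * opRpow a t = cfc (fun x : ℝ => x ^ (r + t)) a := by
    intro r t
    rw [opRpow, opRpow, ← cfc_mul _ _ a (hconta r) (hconta t)]
    exact cfc_congr fun x hx => (Real.rpow_add (hspa x hx) r t).symm
  have cfc_one' : cfc (fun x : ℝ => x ^ (1:ℝ)) a = a := by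
    rw [show (fun x : ℝ => x ^ (1:ℝ)) = fun x : ℝ => x from funext fun x => Real.rpow_one x,
      cfc_id' ℝ a]
  have cfc_zero' : cfc (fun x : ℝ => x ^ (0:ℝ)) a = 1 := by
    rw [show (fun x : ℝ => x ^ (0:ℝ)) = fun _ : ℝ => (1:ℝ) from funext fun x => Real.rpow_zero x,
      cfc_const_one ℝ a]
  have hss : s * s = a := by rw [hs, mul_rpow]; norm_num; exact cfc_id' ℝ a
  have hssi : s * si = 1 := by rw [hs, hsi, mul_rpow]; norm_num; exact cfc_const_one ℝ a
  have hsis : si * s = 1 := by rw [hs, hsi, mul_rpow]; norm_num; exact cfc_const_one ℝ a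
  set c := si * b * si with hc
  have hsias : si * a * si = 1 := by
    rw [← hss, show si * (s * s) * si = (si * s) * (s * si) by noncomm_ring, hsis, hssi, one_mul]
  have hscs : s * c * s = b := by
    rw [hc, show s * (si * b * si) * s = (s * si) * b * (si * s) by noncomm_ring, hssi, hsis,
      one_mul, mul_one]
  have hc0 : 0 ≤ c := by
    have := star_left_conjugate_nonneg hb si
    rwa [hsisa.star_eq] at this
  have hcsa : IsSelfAdjoint c := .of_nonneg hc0
  have hclo : m • (1 : H →L[ℂ] H) ≤ c := by
    have := hsisa.conjugate_le_conjugate h1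
    rwa [show si * (m • a) * si = m • (si * a * si) by
      rw [mul_smul_comm, smul_mul_assoc], hsias] at this
  have hchi : c ≤ M • (1 : H →L[ℂ] H) := by
    have := hsisa.conjugate_le_conjugate h2
    rwa [show si * (M • a) * si = M • (si * a * si) by
      rw [mul_smul_comm, smul_mul_assoc], hsias] at this
  have hspec : spectrum ℝ c ⊆ Set.Icc m M := by
    intro x hx
    constructor
    · refine (algebraMap_le_iff_le_spectrum (R := ℝ) (a := c) hcsa).mp ?_ x hx
      rwa [Algebra.algebraMap_eq_smul_one]
    · refine (le_algebraMap_iff_spectrum_le (R := ℝ) (a := c) hcsa).mp ?_ x hx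
      rwa [Algebra.algebraMap_eq_smul_one]
  have hcontp : ContinuousOn (fun x : ℝ => x ^ α) (spectrum ℝ c) := fun x hx =>
    (Real.continuousAt_rpow_const x α (Or.inr hα.1.le)).continuousWithinAt
  have hcaff : ContinuousOn (fun t : ℝ => μ' * t + ν') (spectrum ℝ c) :=
    ((continuous_const.mul continuous_id).add continuous_const).continuousOn
  have hcaff2 : ContinuousOn (fun t : ℝ => g * (μ' * t + ν')) (spectrum ℝ c) :=
    (continuous_const.mul ((continuous_const.mul continuous_id).add continuous_const)).continuousOn
  have haff : cfc (fun t : ℝ => μ' * t + ν') c = μ' • c + ν' • 1 := by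
    rw [cfc_add c (fun t => μ' * t) (fun _ => ν') ((continuous_const.mul continuous_id).continuousOn)
      continuousOn_const, cfc_const_mul μ' (fun t : ℝ => t) c continuousOn_id,
      cfc_id' ℝ c, cfc_const ν' c, Algebra.algebraMap_eq_smul_one]
  have hwgm : wgm α a b = s * cfc (fun x : ℝ => x ^ α) c * s := rfl
  constructor
  · have hle : cfc (fun t : ℝ => μ' * t + ν') c ≤ cfc (fun x : ℝ => x ^ α) c :=
      cfc_mono (fun x hx => hlow x (hspec hx)) hcaff hcontp
    have := hssa.conjugate_le_conjugate hle
    rw [haff] at this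
    calc μ' • b + ν' • a = s * (μ' • c + ν' • 1) * s := by
          rw [mul_add, add_mul, mul_smul_comm, smul_mul_assoc, mul_smul_comm, smul_mul_assoc,
            hscs, mul_one, hss]
      _ ≤ s * cfc (fun x : ℝ => x ^ α) c * s := this
      _ = wgm α a b := hwgm.symm
  · have hle : cfc (fun x : ℝ => x ^ α) c ≤ cfc (fun t : ℝ => g * (μ' * t + ν')) c :=
      cfc_mono (fun x hx => hupp x (hspec hx)) hcontp hcaff2
    have h2' := hssa.conjugate_le_conjugate hle
    rw [cfc_const_mul g (fun t : ℝ => μ' * t + ν') c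
      (((continuous_const.mul continuous_id).add continuous_const).continuousOn), haff] at h2'
    calc wgm α a b = s * cfc (fun x : ℝ => x ^ α) c * s := hwgm
      _ ≤ s * (g • (μ' • c + ν' • 1)) * s := h2'
      _ = g • (μ' • b + ν' • a) := by
          rw [mul_smul_comm, smul_mul_assoc, mul_add, add_mul, mul_smul_comm, smul_mul_assoc,
            mul_smul_comm, smul_mul_assoc, hscs, mul_one, hss]

lemma rAndo.smul_nonneg'' {g : ℝ} (hg : 0 ≤ g) {Z : H →L[ℂ] H} (hZ : 0 ≤ Z) : 0 ≤ g • Z := by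
  have h := star_left_conjugate_nonneg hZ (Real.sqrt g • 1)
  have heq : star (Real.sqrt g • (1 : H →L[ℂ] H)) * Z * (Real.sqrt g • 1) = g • Z := by
    simp [star_smul, smul_mul_assoc, mul_smul_comm, smul_smul, Real.mul_self_sqrt hg]
  rwa [heq] at h

/-- Reverse Ando inequality for the weighted geometric mean via the Mond–Pečarić method:
`γ · Φ(A ♯_α B) ≥ Φ(A) ♯_α Φ(B)` whenever `mA ≤ B ≤ MA`. -/
theorem reverse_ando_weighted_geometric_mean
    {K : Type*} [NormedAddCommGroup K] [InnerProductSpace ℂ K] [CompleteSpace K]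
    (m M : ℝ) (hm : 0 < m) (hmM : m < M)
    (α : ℝ) (hα : α ∈ Set.Ioo (0 : ℝ) 1)
    (Φ : (H →L[ℂ] H) →ₗ[ℂ] (K →L[ℂ] K))
    (hΦ_unital : Φ 1 = 1)
    (hΦ_pos : ∀ X : H →L[ℂ] H, 0 ≤ X → 0 ≤ Φ X)
    (μ ν γ : ℝ)
    (hμ : μ = (M ^ α - m ^ α) / (M - m))
    (hν : ν = (M * m ^ α - m * M ^ α) / (M - m))
    (hγ : IsGreatest ((fun t => t ^ α / (μ * t + ν)) '' Set.Icc m M) γ)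
    (A B : H →L[ℂ] H) (hA : 0 ≤ A) (hAu : IsUnit A) (hB : 0 ≤ B) (hBu : IsUnit B)
    (h1 : m • A ≤ B) (h2 : B ≤ M • A) :
    wgm α (Φ A) (Φ B) ≤ γ • Φ (wgm α A B) := by
  have hMm : (0:ℝ) < M - m := sub_pos.mpr hmM
  -- real-number facts
  have hμ0 : 0 ≤ μ := by
    rw [hμ]
    exact div_nonneg (sub_nonneg.mpr (Real.rpow_le_rpow hm.le hmM.le hα.1.le)) hMm.le
  have hmval : μ * m + ν = m ^ α := by
    rw [hμ, hν]; field_simp; ring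
  have hpos : ∀ t ∈ Set.Icc m M, 0 < μ * t + ν := by
    intro t ht
    have h1' : 0 < m ^ α := Real.rpow_pos_of_pos hm α
    nlinarith [mul_le_mul_of_nonneg_left ht.1 hμ0]
  have hchord : ∀ t ∈ Set.Icc m M, μ * t + ν ≤ t ^ α := by
    intro t ht
    set l := (M - t) / (M - m) with hl
    have hl0 : 0 ≤ l := div_nonneg (by linarith [ht.2]) hMm.le
    have hl1 : 0 ≤ 1 - l := by
      have : l ≤ 1 := (div_le_one hMm).mpr (by linarith [ht.1])
      linarith
    have key := (Real.concaveOn_rpow hα.1.le hα.2.le).2 (Set.mem_Ici.mpr hm.le)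
      (Set.mem_Ici.mpr (hm.trans hmM).le) hl0 hl1 (by ring)
    rw [smul_eq_mul, smul_eq_mul, smul_eq_mul, smul_eq_mul] at key
    have hx : l * m + (1 - l) * M = t := by
      rw [hl]; field_simp; ring
    have hy : μ * t + ν = l * m ^ α + (1 - l) * M ^ α := by
      rw [hμ, hν, hl]; field_simp; ring
    rw [hx] at key
    linarith [hy ▸ key]
  have hupp : ∀ t ∈ Set.Icc m M, t ^ α ≤ γ * (μ * t + ν) := by
    intro t ht
    exact (div_le_iff₀ (hpos t ht)).mp (hγ.2 ⟨t, ht, rfl⟩)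
  have hγ0 : (0:ℝ) ≤ γ := by
    have h := hγ.2 ⟨m, Set.left_mem_Icc.mpr hmM.le, rfl⟩
    have : (0:ℝ) < m ^ α / (μ * m + ν) := by
      rw [hmval]; positivity
    linarith
  -- Φ is monotone and ℝ-homogeneous
  have hmono : ∀ X Y : H →L[ℂ] H, X ≤ Y → Φ X ≤ Φ Y := by
    intro X Y h
    have := hΦ_pos _ (sub_nonneg.mpr h)
    rw [map_sub] at this
    exact sub_nonneg.mp this
  have hsmul : ∀ (r : ℝ) (X : H →L[ℂ] H), Φ (r • X) = r • Φ X := fun r X =>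
    Φ.map_smul_of_tower r X
  -- trivial case
  by_cases htriv : Subsingleton (H →L[ℂ] H)
  · have h10 : (1 : K →L[ℂ] K) = 0 := by
      rw [← hΦ_unital, Subsingleton.elim (1 : H →L[ℂ] H) 0, map_zero]
    have : Subsingleton (K →L[ℂ] K) := subsingleton_of_zero_eq_one h10.symm
    exact le_of_eq (Subsingleton.elim _ _)
  have : Nontrivial (H →L[ℂ] H) := not_subsingleton_iff_nontrivial.mp htriv
  -- Φ A is positive and invertible
  have hsaA : IsSelfAdjoint A := .of_nonneg hA
  obtain ⟨ε, hε, hεA⟩ := (CFC.exists_pos_algebraMap_le_iff (a := A) hsaA).mpr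
    (rAndo.spec_pos hA hAu)
  have hΦA : 0 ≤ Φ A := hΦ_pos A hA
  have hΦB : 0 ≤ Φ B := hΦ_pos B hB
  have hsaΦA : IsSelfAdjoint (Φ A) := .of_nonneg hΦA
  have hεΦA : algebraMap ℝ (K →L[ℂ] K) ε ≤ Φ A := by
    have := hmono _ _ hεA
    rwa [Algebra.algebraMap_eq_smul_one, hsmul, hΦ_unital,
      ← Algebra.algebraMap_eq_smul_one] at this
  have hΦAu : IsUnit (Φ A) := by
    rw [← spectrum.zero_notMem_iff ℝ]
    intro h0
    have := (algebraMap_le_iff_le_spectrum (R := ℝ) (a := Φ A) hsaΦA).mp hεΦA 0 h0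
    linarith
  have hΦ1 : m • Φ A ≤ Φ B := by
    have := hmono _ _ h1; rwa [hsmul] at this
  have hΦ2 : Φ B ≤ M • Φ A := by
    have := hmono _ _ h2; rwa [hsmul] at this
  -- apply the key lemma on both sides
  have hH := (rAndo.key hm hα A B hA hAu hB h1 h2 μ ν γ hchord hupp).1
  have hK := (rAndo.key hm hα (Φ A) (Φ B) hΦA hΦAu hΦB hΦ1 hΦ2 μ ν γ hchord hupp).2
  calc wgm α (Φ A) (Φ B) ≤ γ • (μ • Φ B + ν • Φ A) := hK
    _ = γ • Φ (μ • B + ν • A) := by rw [map_add, hsmul, hsmul]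
    _ ≤ γ • Φ (wgm α A B) := by
        have h := rAndo.smul_nonneg'' hγ0 (sub_nonneg.mpr (hmono _ _ hH))
        rw [smul_sub] at h
        exact sub_nonneg.mp h
end

section
/- Let 0 < m < M, let α ∈ (0,1), and let A_j, B_j (1 ≤ j ≤ n) be positive invertible bounded operators on a complex Hilbert space with m A_j ≤ B_j ≤ M A_j for all j. Then (α^α (M − m) (M m^α − m M^α)^{α−1} / ((1−α)^{α−1} (M^α − m^α)^α)) · Σ_{j=1}^n (A_j ♯_α B_j) ≥ (Σ_{j=1}^n A_j) ♯_α (Σ_{j=1}^n B_j). -/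
set_option synthInstance.maxHeartbeats 1000000
set_option maxHeartbeats 1000000

variable {H : Type*} [NormedAddCommGroup H] [InnerProductSpace ℂ H] [CompleteSpace H]

namespace ReverseWGM

/- ### Scalar lemmas -/

private lemma log_inj {a b : ℝ} (ha : 0 < a) (hb : 0 < b) (h : Real.log a = Real.log b) :
    a = b := by rw [← Real.exp_log ha, ← Real.exp_log hb, h]

private lemma scalar_chord {m M α : ℝ} (hm : 0 < m) (hmM : m < M) (hα0 : 0 < α) (hα1 : α < 1)
    {x : ℝ} (hx : x ∈ Set.Icc m M) :
    (M ^ α - m ^ α) / (M - m) * x + (M * m ^ α - m * M ^ α) / (M - m) ≤ x ^ α := by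
  obtain ⟨hx1, hx2⟩ := hx
  have hMm : (0:ℝ) < M - m := by linarith
  have key := (Real.concaveOn_rpow hα0.le hα1.le).2 (Set.mem_Ici.mpr hm.le)
      (Set.mem_Ici.mpr (by linarith : (0:ℝ) ≤ M))
      (div_nonneg (by linarith : (0:ℝ) ≤ M - x) hMm.le)
      (div_nonneg (by linarith : (0:ℝ) ≤ x - m) hMm.le)
      (by field_simp; ring)
  simp only [smul_eq_mul] at key
  have hx' : (M - x)/(M-m) * m + (x - m)/(M-m) * M = x := by field_simp; ring
  rw [hx'] at key
  calc (M ^ α - m ^ α) / (M - m) * x + (M * m ^ α - m * M ^ α) / (M - m)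
      = (M - x)/(M-m) * m^α + (x - m)/(M-m) * M^α := by field_simp; ring
    _ ≤ x ^ α := key

private lemma scalar_tangent {α t x : ℝ} (hα0 : 0 < α) (hα1 : α < 1) (ht : 0 < t) (hx : 0 ≤ x) :
    x ^ α ≤ α * t ^ (α - 1) * x + (1 - α) * t ^ α := by
  have h := Real.geom_mean_le_arith_mean2_weighted hα0.le (by linarith : (0:ℝ) ≤ 1 - α)
      hx ht.le (by ring)
  have ht1 : (0:ℝ) < t ^ (α-1) := Real.rpow_pos_of_pos ht _
  have h2 : x ^ α = x ^ α * t ^ (1-α) * t ^ (α-1) := by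
    rw [mul_assoc, ← Real.rpow_add ht]; norm_num
  rw [h2]
  calc x ^ α * t ^ (1-α) * t ^ (α-1) ≤ (α * x + (1-α) * t) * t ^ (α-1) :=
        mul_le_mul_of_nonneg_right h ht1.le
    _ = α * t ^ (α-1) * x + (1-α) * (t ^ (1:ℝ) * t ^ (α-1)) := by
        rw [Real.rpow_one]; ring
    _ = α * t ^ (α-1) * x + (1 - α) * t ^ α := by
        rw [← Real.rpow_add ht]; norm_num

/- ### Operator lemmas -/

private lemma op_smul_le_smul {c : ℝ} (hc : 0 ≤ c) {a b : H →L[ℂ] H} (h : a ≤ b) :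
    c • a ≤ c • b := by
  rw [← sub_nonneg, ← smul_sub]
  have h' : (0:H →L[ℂ] H) ≤ b - a := sub_nonneg.2 h
  have key : c • (b - a) =
      star ((Real.sqrt c : ℝ) • (1 : H →L[ℂ] H)) * (b - a) * ((Real.sqrt c : ℝ) • 1) := by
    simp only [star_smul, star_trivial, star_one, smul_mul_assoc, mul_smul_comm, one_mul,
      mul_one, smul_smul]
    rw [Real.mul_self_sqrt hc]
  rw [key]
  exact star_left_conjugate_nonneg h' _

section Sandwich

variable {A B : H →L[ℂ] H} {m M : ℝ}

private lemma spec_pos (hA : 0 ≤ A) (hAu : IsUnit A) : ∀ x ∈ spectrum ℝ A, 0 < x := by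
  intro x hx
  refine (spectrum_nonneg_of_nonneg hA hx).lt_of_ne' fun h => ?_
  exact (spectrum.zero_notMem_iff ℝ).mpr hAu (h ▸ hx)

private lemma cont_rpow_on_spec (hA : 0 ≤ A) (hAu : IsUnit A) (r : ℝ) :
    ContinuousOn (fun x : ℝ => x ^ r) (spectrum ℝ A) := fun x hx =>
  (Real.continuousAt_rpow_const x r (Or.inl (spec_pos hA hAu x hx).ne')).continuousWithinAt

private lemma opRpow_mul (hA : 0 ≤ A) (hAu : IsUnit A) (r s : ℝ) :
    opRpow A r * opRpow A s = opRpow A (r + s) := by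
  have h2 := cfc_mul (R := ℝ) (a := A) (fun x : ℝ => x ^ r) (fun x : ℝ => x ^ s)
      (cont_rpow_on_spec hA hAu r) (cont_rpow_on_spec hA hAu s)
  have h1 : cfc (fun x : ℝ => x ^ r * x ^ s) A = cfc (fun x : ℝ => x ^ (r + s)) A :=
    cfc_congr fun x hx => (Real.rpow_add (spec_pos hA hAu x hx) r s).symm
  rw [opRpow, opRpow, opRpow, ← h2, h1]

private lemma opRpow_one' (hA : 0 ≤ A) : opRpow A 1 = A := by
  rw [opRpow]
  have : cfc (fun x : ℝ => x ^ (1:ℝ)) A = cfc (fun x : ℝ => x) A :=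
    cfc_congr fun x _ => Real.rpow_one x
  rw [this]
  exact cfc_id' ℝ A (IsSelfAdjoint.of_nonneg hA)

private lemma opRpow_zero' (hA : 0 ≤ A) : opRpow A 0 = 1 := by
  rw [opRpow]
  have : cfc (fun x : ℝ => x ^ (0:ℝ)) A = cfc (fun _ : ℝ => (1:ℝ)) A :=
    cfc_congr fun x _ => Real.rpow_zero x
  rw [this, cfc_const_one ℝ A (IsSelfAdjoint.of_nonneg hA)]

private lemma sqrt_mul_invsqrt (hA : 0 ≤ A) (hAu : IsUnit A) :
    opRpow A (1/2) * opRpow A (-(1/2)) = 1 := by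
  rw [opRpow_mul hA hAu]
  norm_num
  exact opRpow_zero' hA

private lemma invsqrt_mul_sqrt (hA : 0 ≤ A) (hAu : IsUnit A) :
    opRpow A (-(1/2)) * opRpow A (1/2) = 1 := by
  rw [opRpow_mul hA hAu]
  norm_num
  exact opRpow_zero' hA

private lemma sqrt_mul_sqrt (hA : 0 ≤ A) (hAu : IsUnit A) :
    opRpow A (1/2) * opRpow A (1/2) = A := by
  rw [opRpow_mul hA hAu]
  norm_num
  exact opRpow_one' hA

private lemma opRpow_isSelfAdjoint (A : H →L[ℂ] H) (r : ℝ) : IsSelfAdjoint (opRpow A r) :=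
  cfc_predicate _ A

/-- The spectrum of `C = A^{-1/2} B A^{-1/2}` lies in `[m, M]`, plus basic conjugation facts. -/
private lemma spec_C_mem (hA : 0 ≤ A) (hAu : IsUnit A) (hB : 0 ≤ B)
    (h1 : m • A ≤ B) (h2 : B ≤ M • A) :
    spectrum ℝ (opRpow A (-(1/2)) * B * opRpow A (-(1/2))) ⊆ Set.Icc m M := by
  set S := opRpow A (1/2)
  set T := opRpow A (-(1/2))
  set C := T * B * T with hC
  have hTsa : IsSelfAdjoint T := opRpow_isSelfAdjoint A _
  have hTAT : T * A * T = 1 := by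
    have h0 : T * A * T = (T * S) * (S * T) := by
      rw [← sqrt_mul_sqrt hA hAu]; noncomm_ring
    rw [h0, invsqrt_mul_sqrt hA hAu, sqrt_mul_invsqrt hA hAu, one_mul]
  have hm1 : m • (1 : H →L[ℂ] H) ≤ C := by
    have h := hTsa.conjugate_le_conjugate h1
    rwa [mul_smul_comm, smul_mul_assoc, hTAT] at h
  have hM1 : C ≤ M • (1 : H →L[ℂ] H) := by
    have h := hTsa.conjugate_le_conjugate h2
    rwa [mul_smul_comm, smul_mul_assoc, hTAT] at h
  intro x hx
  constructor
  · have hnn : (0:H →L[ℂ] H) ≤ C - algebraMap ℝ (H →L[ℂ] H) m := by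
      rw [Algebra.algebraMap_eq_smul_one]; exact sub_nonneg.2 hm1
    have hmem : x - m ∈ spectrum ℝ (C - algebraMap ℝ (H →L[ℂ] H) m) := by
      rw [← spectrum.sub_singleton_eq]
      exact Set.sub_mem_sub hx rfl
    linarith [spectrum_nonneg_of_nonneg hnn hmem]
  · have hnn : (0:H →L[ℂ] H) ≤ algebraMap ℝ (H →L[ℂ] H) M - C := by
      rw [Algebra.algebraMap_eq_smul_one]; exact sub_nonneg.2 hM1
    have hmem : M - x ∈ spectrum ℝ (algebraMap ℝ (H →L[ℂ] H) M - C) := by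
      rw [← spectrum.singleton_sub_eq]
      exact Set.sub_mem_sub rfl hx
    linarith [spectrum_nonneg_of_nonneg hnn hmem]

private lemma cfc_linear (p q : ℝ) {C : H →L[ℂ] H} (hCsa : IsSelfAdjoint C) :
    cfc (fun x : ℝ => p * x + q) C = p • C + q • (1 : H →L[ℂ] H) := by
  rw [cfc_add (a := C) (fun x : ℝ => p * x) (fun _ : ℝ => q) (by fun_prop) (by fun_prop)]
  rw [show (fun x : ℝ => p * x) = (p * ·) from rfl, cfc_const_mul_id p C hCsa,
    cfc_const q C hCsa, Algebra.algebraMap_eq_smul_one]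

private lemma conj_linear (hA : 0 ≤ A) (hAu : IsUnit A) (hB : 0 ≤ B) (p q : ℝ) :
    opRpow A (1/2) * (p • (opRpow A (-(1/2)) * B * opRpow A (-(1/2))) +
        q • (1 : H →L[ℂ] H)) * opRpow A (1/2) = p • B + q • A := by
  set S := opRpow A (1/2)
  set T := opRpow A (-(1/2))
  have hSCS : S * (T * B * T) * S = B := by
    have h0 : S * (T * B * T) * S = (S * T) * B * (T * S) := by noncomm_ring
    rw [h0, sqrt_mul_invsqrt hA hAu, invsqrt_mul_sqrt hA hAu, one_mul, mul_one]
  have hSS : S * S = A := sqrt_mul_sqrt hA hAu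
  calc S * (p • (T * B * T) + q • (1 : H →L[ℂ] H)) * S
      = p • (S * (T * B * T) * S) + q • (S * (1 : H →L[ℂ] H) * S) := by
        simp only [mul_add, add_mul, mul_smul_comm, smul_mul_assoc]
    _ = p • B + q • A := by rw [hSCS, mul_one, hSS]

private lemma C_isSelfAdjoint (hA : 0 ≤ A) (hB : 0 ≤ B) :
    IsSelfAdjoint (opRpow A (-(1/2)) * B * opRpow A (-(1/2))) := by
  set T := opRpow A (-(1/2))
  have hTsa : IsSelfAdjoint T := opRpow_isSelfAdjoint A _
  have hBsa : IsSelfAdjoint B := IsSelfAdjoint.of_nonneg hB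
  rw [IsSelfAdjoint, star_mul, star_mul, hTsa.star_eq, hBsa.star_eq, mul_assoc]

private lemma cont_on_Icc {α : ℝ} (hm : 0 < m) :
    ContinuousOn (fun x : ℝ => x ^ α) (Set.Icc m M) := fun x hx =>
  (Real.continuousAt_rpow_const x α (Or.inl (hm.trans_le hx.1).ne')).continuousWithinAt

private lemma wgm_ge_linear (hm : 0 < m) (hA : 0 ≤ A) (hAu : IsUnit A) (hB : 0 ≤ B)
    (h1 : m • A ≤ B) (h2 : B ≤ M • A) {α p q : ℝ}
    (hscal : ∀ x ∈ Set.Icc m M, p * x + q ≤ x ^ α) :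
    p • B + q • A ≤ wgm α A B := by
  set T := opRpow A (-(1/2))
  set C := T * B * T with hC
  have hCsa : IsSelfAdjoint C := C_isSelfAdjoint hA hB
  have hspec := spec_C_mem hA hAu hB h1 h2
  have hmono : cfc (fun x : ℝ => p * x + q) C ≤ cfc (fun x : ℝ => x ^ α) C :=
    cfc_mono (fun x hx => hscal x (hspec hx)) (by fun_prop)
      ((cont_on_Icc hm).mono hspec)
  rw [cfc_linear p q hCsa] at hmono
  have hconj := (opRpow_isSelfAdjoint A (1/2)).conjugate_le_conjugate hmono
  rwa [conj_linear hA hAu hB p q] at hconj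

private lemma wgm_le_linear (hm : 0 < m) (hA : 0 ≤ A) (hAu : IsUnit A) (hB : 0 ≤ B)
    (h1 : m • A ≤ B) (h2 : B ≤ M • A) {α p q : ℝ}
    (hscal : ∀ x ∈ Set.Icc m M, x ^ α ≤ p * x + q) :
    wgm α A B ≤ p • B + q • A := by
  set T := opRpow A (-(1/2))
  set C := T * B * T with hC
  have hCsa : IsSelfAdjoint C := C_isSelfAdjoint hA hB
  have hspec := spec_C_mem hA hAu hB h1 h2
  have hmono : cfc (fun x : ℝ => x ^ α) C ≤ cfc (fun x : ℝ => p * x + q) C :=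
    cfc_mono (fun x hx => hscal x (hspec hx)) ((cont_on_Icc hm).mono hspec) (by fun_prop)
  rw [cfc_linear p q hCsa] at hmono
  have hconj := (opRpow_isSelfAdjoint A (1/2)).conjugate_le_conjugate hmono
  rwa [conj_linear hA hAu hB p q] at hconj

end Sandwich

/- ### Constants -/

private lemma P1_pos {m M α : ℝ} (hm : 0 < m) (hmM : m < M) (hα0 : 0 < α) :
    0 < M ^ α - m ^ α := by
  have := Real.rpow_lt_rpow hm.le hmM hα0
  linarith

private lemma P2_pos {m M α : ℝ} (hm : 0 < m) (hmM : m < M) (hα1 : α < 1) :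
    0 < M * m ^ α - m * M ^ α := by
  have hM : 0 < M := hm.trans hmM
  have h := Real.rpow_lt_rpow hm.le hmM (by linarith : 0 < 1 - α)
  rw [Real.rpow_sub hm, Real.rpow_sub hM, Real.rpow_one, Real.rpow_one] at h
  have hmα : 0 < m ^ α := Real.rpow_pos_of_pos hm α
  have hMα : 0 < M ^ α := Real.rpow_pos_of_pos hM α
  rw [div_lt_div_iff₀ hmα hMα] at h
  linarith

private lemma key_const {m M α : ℝ} (hm : 0 < m) (hmM : m < M) (hα0 : 0 < α) (hα1 : α < 1) :
    ∃ t : ℝ, 0 < t ∧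
      α * t ^ (α - 1) = (α ^ α * (M - m) * (M * m ^ α - m * M ^ α) ^ (α - 1) /
        ((1 - α) ^ (α - 1) * (M ^ α - m ^ α) ^ α)) * ((M ^ α - m ^ α) / (M - m)) ∧
      (1 - α) * t ^ α = (α ^ α * (M - m) * (M * m ^ α - m * M ^ α) ^ (α - 1) /
        ((1 - α) ^ (α - 1) * (M ^ α - m ^ α) ^ α)) * ((M * m ^ α - m * M ^ α) / (M - m)) := by
  have hMm : (0:ℝ) < M - m := by linarith
  have h1α : (0:ℝ) < 1 - α := by linarith
  have hP1 := P1_pos hm hmM hα0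
  have hP2 := P2_pos hm hmM hα1
  set μ := (M ^ α - m ^ α) / (M - m) with hμ
  set ν := (M * m ^ α - m * M ^ α) / (M - m) with hν
  have hμ0 : 0 < μ := div_pos hP1 hMm
  have hν0 : 0 < ν := div_pos hP2 hMm
  set t := α * ν / ((1 - α) * μ) with ht_def
  have ht : 0 < t := div_pos (mul_pos hα0 hν0) (mul_pos h1α hμ0)
  set K := α ^ α * (M - m) * (M * m ^ α - m * M ^ α) ^ (α - 1) /
      ((1 - α) ^ (α - 1) * (M ^ α - m ^ α) ^ α) with hK_def
  have hK : 0 < K := div_pos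
    (mul_pos (mul_pos (Real.rpow_pos_of_pos hα0 _) hMm) (Real.rpow_pos_of_pos hP2 _))
    (mul_pos (Real.rpow_pos_of_pos h1α _) (Real.rpow_pos_of_pos hP1 _))
  have lt : Real.log t = Real.log α + Real.log ν - (Real.log (1-α) + Real.log μ) := by
    rw [ht_def, Real.log_div (mul_pos hα0 hν0).ne' (mul_pos h1α hμ0).ne',
      Real.log_mul hα0.ne' hν0.ne', Real.log_mul h1α.ne' hμ0.ne']
  have lμ : Real.log μ = Real.log (M ^ α - m ^ α) - Real.log (M - m) :=
    Real.log_div hP1.ne' hMm.ne'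
  have lν : Real.log ν = Real.log (M * m ^ α - m * M ^ α) - Real.log (M - m) :=
    Real.log_div hP2.ne' hMm.ne'
  have lK : Real.log K = α * Real.log α + Real.log (M - m)
      + (α - 1) * Real.log (M * m ^ α - m * M ^ α)
      - ((α - 1) * Real.log (1 - α) + α * Real.log (M ^ α - m ^ α)) := by
    rw [hK_def, Real.log_div
        (mul_pos (mul_pos (Real.rpow_pos_of_pos hα0 _) hMm) (Real.rpow_pos_of_pos hP2 _)).ne'
        (mul_pos (Real.rpow_pos_of_pos h1α _) (Real.rpow_pos_of_pos hP1 _)).ne',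
      Real.log_mul (mul_pos (Real.rpow_pos_of_pos hα0 _) hMm).ne'
        (Real.rpow_pos_of_pos hP2 _).ne',
      Real.log_mul (Real.rpow_pos_of_pos hα0 _).ne' hMm.ne',
      Real.log_mul (Real.rpow_pos_of_pos h1α _).ne' (Real.rpow_pos_of_pos hP1 _).ne',
      Real.log_rpow hα0, Real.log_rpow h1α, Real.log_rpow hP2, Real.log_rpow hP1]
    try ring
  refine ⟨t, ht, ?_, ?_⟩
  · apply log_inj (mul_pos hα0 (Real.rpow_pos_of_pos ht _)) (mul_pos hK hμ0)
    rw [Real.log_mul hα0.ne' (Real.rpow_pos_of_pos ht _).ne', Real.log_rpow ht,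
      Real.log_mul hK.ne' hμ0.ne', lt, lK]
    rw [lμ, lν]
    ring
  · apply log_inj (mul_pos h1α (Real.rpow_pos_of_pos ht _)) (mul_pos hK hν0)
    rw [Real.log_mul h1α.ne' (Real.rpow_pos_of_pos ht _).ne', Real.log_rpow ht,
      Real.log_mul hK.ne' hν0.ne', lt, lK]
    rw [lμ, lν]
    ring

end ReverseWGM

open ReverseWGM in
/-- Reverse Callebaut-type inequality for sums:
`(α^α (M−m)(Mm^α − mM^α)^{α−1} / ((1−α)^{α−1}(M^α − m^α)^α)) · Σ (A_j ♯_α B_j)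
  ≥ (Σ A_j) ♯_α (Σ B_j)` whenever `0 < mA_j ≤ B_j ≤ MA_j`. -/
theorem reverse_weighted_geometric_mean_sum
    (m M : ℝ) (hm : 0 < m) (hmM : m < M)
    (α : ℝ) (hα : α ∈ Set.Ioo (0 : ℝ) 1)
    (n : ℕ) (A B : Fin n → (H →L[ℂ] H))
    (hA : ∀ j, 0 ≤ A j) (hAu : ∀ j, IsUnit (A j))
    (hB : ∀ j, 0 ≤ B j) (hBu : ∀ j, IsUnit (B j))
    (h1 : ∀ j, m • A j ≤ B j) (h2 : ∀ j, B j ≤ M • A j) :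
    wgm α (∑ j, A j) (∑ j, B j) ≤
      (α ^ α * (M - m) * (M * m ^ α - m * M ^ α) ^ (α - 1) /
        ((1 - α) ^ (α - 1) * (M ^ α - m ^ α) ^ α)) • ∑ j, wgm α (A j) (B j) := by
  obtain ⟨hα0, hα1⟩ := hα
  rcases subsingleton_or_nontrivial (H →L[ℂ] H) with hs | hs
  · exact le_of_eq (Subsingleton.elim _ _)
  rcases Nat.eq_zero_or_pos n with hn | hn
  · subst hn
    simp only [Finset.univ_eq_empty, Finset.sum_empty, smul_zero]
    have h0 : opRpow (0 : H →L[ℂ] H) (1/2) = 0 := by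
      rw [opRpow]
      have he : cfc (fun x : ℝ => x ^ (1/2 : ℝ)) (0 : H →L[ℂ] H)
          = cfc (fun _ : ℝ => (0:ℝ)) (0 : H →L[ℂ] H) := by
        apply cfc_congr
        intro x hx
        rw [spectrum.zero_eq] at hx
        simp only [Set.mem_singleton_iff] at hx
        subst hx
        exact Real.zero_rpow (by norm_num)
      rw [he, cfc_const (0:ℝ) (0 : H →L[ℂ] H) (IsSelfAdjoint.zero _), map_zero]
    have : wgm α (0 : H →L[ℂ] H) 0 = 0 := by
      rw [wgm, h0, zero_mul, zero_mul]
    rw [this]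
  · have hAs : (0 : H →L[ℂ] H) ≤ ∑ j, A j := Finset.sum_nonneg fun j _ => hA j
    have hBs : (0 : H →L[ℂ] H) ≤ ∑ j, B j := Finset.sum_nonneg fun j _ => hB j
    set j0 : Fin n := ⟨0, hn⟩
    have hle0 : A j0 ≤ ∑ j, A j := Finset.single_le_sum (fun i _ => hA i) (Finset.mem_univ j0)
    have hAsu : IsUnit (∑ j, A j) := CStarAlgebra.isUnit_of_le (A j0) hle0 ((hAu j0).isStrictlyPositive (hA j0))
    have h1s : m • ∑ j, A j ≤ ∑ j, B j := by
      rw [Finset.smul_sum]; exact Finset.sum_le_sum fun j _ => h1 j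
    have h2s : (∑ j, B j) ≤ M • ∑ j, A j := by
      rw [Finset.smul_sum]; exact Finset.sum_le_sum fun j _ => h2 j
    obtain ⟨t, ht, hKμ, hKν⟩ := key_const hm hmM hα0 hα1
    set μ := (M ^ α - m ^ α) / (M - m) with hμ
    set ν := (M * m ^ α - m * M ^ α) / (M - m) with hν
    set K := α ^ α * (M - m) * (M * m ^ α - m * M ^ α) ^ (α - 1) /
        ((1 - α) ^ (α - 1) * (M ^ α - m ^ α) ^ α) with hK_def
    have hμ0 : 0 < μ := div_pos (P1_pos hm hmM hα0) (by linarith)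
    have hK : 0 < K := by
      have h : 0 < K * μ := hKμ ▸ mul_pos hα0 (Real.rpow_pos_of_pos ht _)
      nlinarith
    have upper := wgm_le_linear (p := α * t ^ (α-1)) (q := (1-α) * t ^ α) hm hAs hAsu hBs h1s h2s
        (fun x hx => scalar_tangent hα0 hα1 ht (le_trans hm.le hx.1))
    have lower : ∀ j, μ • B j + ν • A j ≤ wgm α (A j) (B j) := fun j =>
      wgm_ge_linear hm (hA j) (hAu j) (hB j) (h1 j) (h2 j)
        (fun x hx => scalar_chord hm hmM hα0 hα1 hx)
    calc wgm α (∑ j, A j) (∑ j, B j)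
        ≤ (α * t ^ (α-1)) • ∑ j, B j + ((1-α) * t ^ α) • ∑ j, A j := upper
      _ = K • (μ • ∑ j, B j + ν • ∑ j, A j) := by
          rw [hKμ, hKν, smul_add, smul_smul, smul_smul]
      _ = K • ∑ j, (μ • B j + ν • A j) := by
          congr 1
          rw [Finset.smul_sum, Finset.smul_sum, ← Finset.sum_add_distrib]
      _ ≤ K • ∑ j, wgm α (A j) (B j) :=
          op_smul_le_smul hK.le (Finset.sum_le_sum fun j _ => lower j)
end

section
/- Let 0 < m < M and let A_j, B_j (1 ≤ j ≤ n) be positive invertible bounded operators on a complex Hilbert space with m A_j ≤ B_j ≤ M A_j for all j. Then ((1+M)(1+m)/(1+√(Mm))^2) · Σ_{j=1}^n (A_j ! B_j) ≥ (Σ_{j=1}^n A_j) ! (Σ_{j=1}^n B_j). -/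
variable {H : Type*} [NormedAddCommGroup H] [InnerProductSpace ℂ H] [CompleteSpace H]

/-- The operator geometric mean `A ♯ B`. -/
noncomputable def geomMean (A B : H →L[ℂ] H) : H →L[ℂ] H := wgm (1/2) A B

/-- The operator arithmetic mean `A ∇ B = (A + B)/2`. -/
noncomputable def arithMean (A B : H →L[ℂ] H) : H →L[ℂ] H := ((1 : ℝ)/2) • (A + B)

/-- The operator harmonic mean `A ! B = ((A⁻¹ + B⁻¹)/2)⁻¹`. -/
noncomputable def harmMean (A B : H →L[ℂ] H) : H →L[ℂ] H :=
  Ring.inverse (((1 : ℝ)/2) • (Ring.inverse A + Ring.inverse B))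

set_option synthInstance.maxHeartbeats 1000000
set_option maxHeartbeats 1000000

lemma harm_repr (A B : H →L[ℂ] H) (hA : 0 ≤ A) (hAu : IsUnit A) (hBu : IsUnit B)
    (m M : ℝ) (hm : 0 < m) (hmM : m ≤ M) (h1 : m • A ≤ B) (h2 : B ≤ M • A) :
    ∃ s T : H →L[ℂ] H, IsSelfAdjoint s ∧ (0 ≤ T) ∧ spectrum ℝ T ⊆ Set.Icc m M ∧
      harmMean A B = s * cfc (fun t : ℝ => 2 * t / (1 + t)) T * s ∧
      ∀ d : ℝ, B + d • A = s * cfc (fun t : ℝ => t + d) T * s := by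
  have hsp0 : (0 : ℝ) ∉ spectrum ℝ A := spectrum.zero_notMem ℝ hAu
  have hsqne : ∀ x ∈ spectrum ℝ A, Real.sqrt x ≠ 0 := by
    intro x hx
    have hxnn : 0 ≤ x := spectrum_nonneg_of_nonneg hA hx
    have : x ≠ 0 := fun h => hsp0 (h ▸ hx)
    positivity
  set su : (H →L[ℂ] H)ˣ := cfcUnits Real.sqrt A hsqne with hsu
  have hsval : (su : H →L[ℂ] H) = cfc Real.sqrt A := rfl
  have hsinv : ((su⁻¹ : (H →L[ℂ] H)ˣ) : H →L[ℂ] H) = cfc (fun x => (Real.sqrt x)⁻¹) A := rfl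
  have hs_sa : IsSelfAdjoint (su : H →L[ℂ] H) := by rw [hsval]; exact cfc_predicate _ _
  have hsi_sa : IsSelfAdjoint ((su⁻¹ : (H →L[ℂ] H)ˣ) : H →L[ℂ] H) := by
    rw [hsinv]; exact cfc_predicate _ _
  have hss : (su : H →L[ℂ] H) * su = A := by
    rw [hsval, ← cfc_mul ..]
    conv_rhs => rw [← cfc_id ℝ A]
    exact cfc_congr fun x hx => Real.mul_self_sqrt (spectrum_nonneg_of_nonneg hA hx)
  -- T
  set bu : (H →L[ℂ] H)ˣ := hBu.unit with hbu
  have hbval : (bu : H →L[ℂ] H) = B := rfl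
  set tu : (H →L[ℂ] H)ˣ := su⁻¹ * bu * su⁻¹ with htu
  set T : H →L[ℂ] H := (tu : H →L[ℂ] H) with hT
  have hTval : T = (su⁻¹ : (H →L[ℂ] H)ˣ) * B * (su⁻¹ : (H →L[ℂ] H)ˣ) := rfl
  -- conjugation identity for arbitrary X
  have conj_eq : ∀ X : H →L[ℂ] H,
      ((su⁻¹ : (H →L[ℂ] H)ˣ) : H →L[ℂ] H) * ((su : H →L[ℂ] H) * X * su) * (su⁻¹ : (H →L[ℂ] H)ˣ) = X := by
    intro X
    calc ((su⁻¹ : (H →L[ℂ] H)ˣ) : H →L[ℂ] H) * ((su : H →L[ℂ] H) * X * su) * (su⁻¹ : (H →L[ℂ] H)ˣ)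
        = (((su⁻¹ : (H →L[ℂ] H)ˣ) : H →L[ℂ] H) * su) * X * ((su : H →L[ℂ] H) * (su⁻¹ : (H →L[ℂ] H)ˣ)) := by noncomm_ring
      _ = X := by rw [Units.inv_mul, Units.mul_inv, one_mul, mul_one]
  have conj_smul_one : ∀ r : ℝ,
      ((su⁻¹ : (H →L[ℂ] H)ˣ) : H →L[ℂ] H) * (r • A) * (su⁻¹ : (H →L[ℂ] H)ˣ) = r • (1 : H →L[ℂ] H) := by
    intro r
    rw [mul_smul_comm, smul_mul_assoc, ← hss]
    congr 1
    have := conj_eq 1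
    rwa [mul_one] at this
  have hmle : m • (1 : H →L[ℂ] H) ≤ T := by
    have := hsi_sa.conjugate_le_conjugate h1
    rwa [conj_smul_one] at this
  have hMle : T ≤ M • (1 : H →L[ℂ] H) := by
    have := hsi_sa.conjugate_le_conjugate h2
    rwa [conj_smul_one] at this
  have hT0 : (0 : H →L[ℂ] H) ≤ T := le_trans (by
      have : (0:ℝ) ≤ m := hm.le
      calc (0 : H →L[ℂ] H) = m • (0 : H →L[ℂ] H) := by simp
        _ ≤ m • (1 : H →L[ℂ] H) := smul_le_smul_of_nonneg_left zero_le_one this) hmle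
  have hT_sa : IsSelfAdjoint T := .of_nonneg hT0
  have hspecT : spectrum ℝ T ⊆ Set.Icc m M := by
    intro x hx
    constructor
    · revert x hx
      rw [← algebraMap_le_iff_le_spectrum (a := T)]
      rwa [Algebra.algebraMap_eq_smul_one]
    · revert x hx
      rw [← le_algebraMap_iff_spectrum_le (a := T)]
      rwa [Algebra.algebraMap_eq_smul_one]

  -- nonvanishing facts on the spectrum of T
  have hpos : ∀ x ∈ spectrum ℝ T, 0 < x := fun x hx => lt_of_lt_of_le hm (hspecT hx).1
  have hcont_inv : ContinuousOn (fun t : ℝ => t⁻¹) (spectrum ℝ T) :=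
    ContinuousOn.inv₀ continuousOn_id fun x hx => (hpos x hx).ne'
  have hcont_h : ContinuousOn (fun t : ℝ => (2:ℝ)⁻¹ * (1 + t⁻¹)) (spectrum ℝ T) :=
    (continuousOn_const.add hcont_inv).const_smul ((2:ℝ)⁻¹)
  have hcont_g : ContinuousOn (fun t : ℝ => 2 * t / (1 + t)) (spectrum ℝ T) := by
    apply ContinuousOn.div (continuousOn_const.mul continuousOn_id)
      (continuousOn_const.add continuousOn_id)
    intro x hx
    have := hpos x hx
    simp only [Pi.add_apply, id_eq]
    intro h
    linarith
  -- B = su * T * su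
  have hB_eq : B = (su : H →L[ℂ] H) * T * su := by
    have : (su * tu * su : (H →L[ℂ] H)ˣ) = bu := by
      rw [htu]
      group
    calc B = ((bu : (H →L[ℂ] H)ˣ) : H →L[ℂ] H) := rfl
      _ = ((su * tu * su : (H →L[ℂ] H)ˣ) : H →L[ℂ] H) := by rw [this]
      _ = (su : H →L[ℂ] H) * T * su := by rw [Units.val_mul, Units.val_mul]
  -- the (B + d • A) identity
  have hBdA : ∀ d : ℝ, B + d • A = (su : H →L[ℂ] H) * cfc (fun t : ℝ => t + d) T * su := by
    intro d
    have hc : cfc (fun t : ℝ => t + d) T = T + d • 1 := by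
      have hadd := cfc_add (a := T) (f := fun t : ℝ => t) (g := fun _ : ℝ => d)
        (by fun_prop) (by fun_prop)
      rw [hadd, cfc_id' ℝ T, cfc_const d T, Algebra.algebraMap_eq_smul_one]
    rw [hc, mul_add, add_mul, ← hB_eq, mul_smul_comm, smul_mul_assoc, mul_one, hss]
  -- the harmonic mean identity
  have hXne : ∀ x ∈ spectrum ℝ T, (2:ℝ)⁻¹ * (1 + x⁻¹) ≠ 0 := by
    intro x hx
    have hx0 := hpos x hx
    have : 0 < (1 + x⁻¹) := by positivity
    positivity
  set xu : (H →L[ℂ] H)ˣ := cfcUnits (fun t : ℝ => (2:ℝ)⁻¹ * (1 + t⁻¹)) T hXne hcont_h hT_sa with hxu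
  have hXval : (xu : H →L[ℂ] H) = cfc (fun t : ℝ => (2:ℝ)⁻¹ * (1 + t⁻¹)) T := rfl
  have hX_eq : (xu : H →L[ℂ] H) = ((1:ℝ)/2) • ((1 : H →L[ℂ] H) + ((tu⁻¹ : (H →L[ℂ] H)ˣ) : H →L[ℂ] H)) := by
    rw [hXval]
    have h1' : cfc (fun t : ℝ => (1:ℝ) + t⁻¹) T = (1 : H →L[ℂ] H) + ((tu⁻¹ : (H →L[ℂ] H)ˣ) : H →L[ℂ] H) := by
      rw [cfc_add _ _ _ continuousOn_const hcont_inv, cfc_const 1 T,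
        map_one (algebraMap ℝ (H →L[ℂ] H)), cfc_inv_id tu]
    rw [show (fun t : ℝ => (2:ℝ)⁻¹ * (1 + t⁻¹)) = (fun t : ℝ => (2:ℝ)⁻¹ • ((1:ℝ) + t⁻¹)) from rfl,
      cfc_smul ((2:ℝ)⁻¹) (fun t : ℝ => (1:ℝ) + t⁻¹) T (continuousOn_const.add hcont_inv), h1']
    norm_num
  have hinvA : Ring.inverse A = ((su⁻¹ : (H →L[ℂ] H)ˣ) : H →L[ℂ] H) * ((su⁻¹ : (H →L[ℂ] H)ˣ) : H →L[ℂ] H) := by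
    have : A = ((su * su : (H →L[ℂ] H)ˣ) : H →L[ℂ] H) := by rw [Units.val_mul, hss]
    rw [this, Ring.inverse_unit, mul_inv_rev, Units.val_mul]
  have hinvB : Ring.inverse B = ((su⁻¹ : (H →L[ℂ] H)ˣ) : H →L[ℂ] H) * ((tu⁻¹ : (H →L[ℂ] H)ˣ) : H →L[ℂ] H) * ((su⁻¹ : (H →L[ℂ] H)ˣ) : H →L[ℂ] H) := by
    have hbu' : B = ((su * tu * su : (H →L[ℂ] H)ˣ) : H →L[ℂ] H) := by
      rw [Units.val_mul, Units.val_mul]; exact hB_eq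
    rw [hbu', Ring.inverse_unit, mul_inv_rev, mul_inv_rev, Units.val_mul, Units.val_mul]
    exact (mul_assoc _ _ _).symm
  have harg : ((1:ℝ)/2) • (Ring.inverse A + Ring.inverse B)
      = ((su⁻¹ : (H →L[ℂ] H)ˣ) : H →L[ℂ] H) * (xu : H →L[ℂ] H) * ((su⁻¹ : (H →L[ℂ] H)ˣ) : H →L[ℂ] H) := by
    rw [hinvA, hinvB, hX_eq]
    rw [mul_smul_comm, smul_mul_assoc]
    congr 1
    noncomm_ring
  have hharm : harmMean A B = (su : H →L[ℂ] H) * ((xu⁻¹ : (H →L[ℂ] H)ˣ) : H →L[ℂ] H) * su := by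
    rw [harmMean, harg]
    have : ((su⁻¹ : (H →L[ℂ] H)ˣ) : H →L[ℂ] H) * (xu : H →L[ℂ] H) * ((su⁻¹ : (H →L[ℂ] H)ˣ) : H →L[ℂ] H)
        = ((su⁻¹ * xu * su⁻¹ : (H →L[ℂ] H)ˣ) : H →L[ℂ] H) := by
      rw [Units.val_mul, Units.val_mul]
    rw [this, Ring.inverse_unit, mul_inv_rev, mul_inv_rev, inv_inv, Units.val_mul, Units.val_mul]
    exact (mul_assoc _ _ _).symm
  have hxuinv : ((xu⁻¹ : (H →L[ℂ] H)ˣ) : H →L[ℂ] H) = cfc (fun t : ℝ => 2 * t / (1 + t)) T := by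
    have : ((xu⁻¹ : (H →L[ℂ] H)ˣ) : H →L[ℂ] H) = cfc (fun t : ℝ => ((2:ℝ)⁻¹ * (1 + t⁻¹))⁻¹) T := rfl
    rw [this]
    apply cfc_congr
    intro x hx
    have hx0 := hpos x hx
    have h1x : (1:ℝ) + x ≠ 0 := by linarith
    field_simp
    ring
  exact ⟨su, T, hs_sa, hT0, hspecT, by rw [hharm, hxuinv], hBdA⟩
lemma harm_lower (A B : H →L[ℂ] H) (hA : 0 ≤ A) (hAu : IsUnit A) (hBu : IsUnit B)
    (m M : ℝ) (hm : 0 < m) (hmM : m ≤ M) (h1 : m • A ≤ B) (h2 : B ≤ M • A) :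
    (2 / ((1 + m) * (1 + M))) • (B + (m * M) • A) ≤ harmMean A B := by
  obtain ⟨s, T, hs, hT0, hspec, hharm, hBdA⟩ := harm_repr A B hA hAu hBu m M hm hmM h1 h2
  have hpos : ∀ x ∈ spectrum ℝ T, 0 < x := fun x hx => lt_of_lt_of_le hm (hspec hx).1
  rw [hharm, hBdA (m * M)]
  set c : ℝ := 2 / ((1 + m) * (1 + M)) with hc
  have key : c • cfc (fun t : ℝ => t + m * M) T ≤ cfc (fun t : ℝ => 2 * t / (1 + t)) T := by
    have hsm : c • cfc (fun t : ℝ => t + m * M) T = cfc (fun t : ℝ => c * (t + m * M)) T := by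
      rw [← cfc_smul c (fun t : ℝ => t + m * M) T (by fun_prop)]
      simp [smul_eq_mul]
    rw [hsm]
    have hcont_g : ContinuousOn (fun t : ℝ => 2 * t / (1 + t)) (spectrum ℝ T) := by
      apply ContinuousOn.div (by fun_prop) (by fun_prop)
      intro x hx
      have := hpos x hx
      intro h
      linarith
    refine cfc_mono (fun x hx => ?_) (by fun_prop) hcont_g
    obtain ⟨hxm, hxM⟩ := hspec hx
    have hx0 : 0 < x := hpos x hx
    have h1x : (0:ℝ) < 1 + x := by linarith
    have hD : (0:ℝ) < (1 + m) * (1 + M) := by nlinarith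
    rw [hc, div_mul_eq_mul_div, div_le_div_iff₀ hD h1x]
    nlinarith [mul_nonneg (sub_nonneg.2 hxm) (sub_nonneg.2 hxM)]
  calc c • (s * cfc (fun t : ℝ => t + m * M) T * s)
      = s * (c • cfc (fun t : ℝ => t + m * M) T) * s := by
        rw [mul_smul_comm, smul_mul_assoc]
    _ ≤ s * cfc (fun t : ℝ => 2 * t / (1 + t)) T * s := hs.conjugate_le_conjugate key

lemma harm_upper (A B : H →L[ℂ] H) (hA : 0 ≤ A) (hAu : IsUnit A) (hBu : IsUnit B)
    (m M : ℝ) (hm : 0 < m) (hmM : m ≤ M) (h1 : m • A ≤ B) (h2 : B ≤ M • A) :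
    harmMean A B ≤ (2 / (1 + Real.sqrt (M * m)) ^ 2) • (B + (m * M) • A) := by
  obtain ⟨s, T, hs, hT0, hspec, hharm, hBdA⟩ := harm_repr A B hA hAu hBu m M hm hmM h1 h2
  have hpos : ∀ x ∈ spectrum ℝ T, 0 < x := fun x hx => lt_of_lt_of_le hm (hspec hx).1
  rw [hharm, hBdA (m * M)]
  set r : ℝ := Real.sqrt (M * m) with hr
  have hr0 : 0 ≤ r := Real.sqrt_nonneg _
  have hr2 : r ^ 2 = M * m := Real.sq_sqrt (by nlinarith)
  set c : ℝ := 2 / (1 + r) ^ 2 with hc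
  have key : cfc (fun t : ℝ => 2 * t / (1 + t)) T ≤ c • cfc (fun t : ℝ => t + m * M) T := by
    have hsm : c • cfc (fun t : ℝ => t + m * M) T = cfc (fun t : ℝ => c * (t + m * M)) T := by
      rw [← cfc_smul c (fun t : ℝ => t + m * M) T (by fun_prop)]
      simp [smul_eq_mul]
    rw [hsm]
    have hcont_g : ContinuousOn (fun t : ℝ => 2 * t / (1 + t)) (spectrum ℝ T) := by
      apply ContinuousOn.div (by fun_prop) (by fun_prop)
      intro x hx
      have := hpos x hx
      intro h
      linarith
    refine cfc_mono (fun x hx => ?_) hcont_g (by fun_prop)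
    have hx0 : 0 < x := hpos x hx
    have h1x : (0:ℝ) < 1 + x := by linarith
    have hD : (0:ℝ) < (1 + r) ^ 2 := by positivity
    rw [hc, div_mul_eq_mul_div, div_le_div_iff₀ h1x hD]
    nlinarith [sq_nonneg (x - r)]
  calc s * cfc (fun t : ℝ => 2 * t / (1 + t)) T * s
      ≤ s * (c • cfc (fun t : ℝ => t + m * M) T) * s := hs.conjugate_le_conjugate key
    _ = c • (s * cfc (fun t : ℝ => t + m * M) T * s) := by
        rw [mul_smul_comm, smul_mul_assoc]


/-- Reverse inequality for the harmonic mean of sums: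
`((1+M)(1+m)/(1+√(Mm))²) · Σ (A_j ! B_j) ≥ (Σ A_j) ! (Σ B_j)`
whenever `0 < mA_j ≤ B_j ≤ MA_j`. -/
theorem reverse_harmonic_mean_sum
    (m M : ℝ) (hm : 0 < m) (hmM : m < M)
    (n : ℕ) (A B : Fin n → (H →L[ℂ] H))
    (hA : ∀ j, 0 ≤ A j) (hAu : ∀ j, IsUnit (A j))
    (hB : ∀ j, 0 ≤ B j) (hBu : ∀ j, IsUnit (B j))
    (h1 : ∀ j, m • A j ≤ B j) (h2 : ∀ j, B j ≤ M • A j) :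
    harmMean (∑ j, A j) (∑ j, B j) ≤
      ((1 + M) * (1 + m) / (1 + Real.sqrt (M * m)) ^ 2) •
        ∑ j, harmMean (A j) (B j) := by
  rcases Nat.eq_zero_or_pos n with hn | hn
  · subst hn
    simp [harmMean]
  have hne : Nonempty (Fin n) := ⟨⟨0, hn⟩⟩
  obtain ⟨j0⟩ := hne
  set SA : H →L[ℂ] H := ∑ j, A j with hSA
  set SB : H →L[ℂ] H := ∑ j, B j with hSB
  have hSA0 : 0 ≤ SA := Finset.sum_nonneg fun j _ => hA j
  have hSAu : IsUnit SA :=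
    CStarAlgebra.isUnit_of_le (A j0)
      (Finset.single_le_sum (fun i _ => hA i) (Finset.mem_univ j0)) ((hAu j0).isStrictlyPositive (hA j0))
  have hSBu : IsUnit SB :=
    CStarAlgebra.isUnit_of_le (B j0)
      (Finset.single_le_sum (fun i _ => hB i) (Finset.mem_univ j0)) ((hBu j0).isStrictlyPositive (hB j0))
  have h1S : m • SA ≤ SB := by
    rw [hSA, hSB, Finset.smul_sum]
    exact Finset.sum_le_sum fun j _ => h1 j
  have h2S : SB ≤ M • SA := by
    rw [hSA, hSB, Finset.smul_sum]
    exact Finset.sum_le_sum fun j _ => h2 j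
  set r : ℝ := Real.sqrt (M * m) with hr
  have hr0 : 0 ≤ r := Real.sqrt_nonneg _
  have hm1 : (0:ℝ) < 1 + m := by linarith
  have hM1 : (0:ℝ) < 1 + M := by linarith
  have hr1 : (0:ℝ) < (1 + r) ^ 2 := by positivity
  -- upper bound for the harmonic mean of the sums
  have hup : harmMean SA SB ≤ (2 / (1 + r) ^ 2) • (SB + (m * M) • SA) :=
    harm_upper SA SB hSA0 hSAu hSBu m M hm hmM.le h1S h2S
  -- lower bound for each term
  have hlow : (2 / ((1 + m) * (1 + M))) • (SB + (m * M) • SA) ≤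
      ∑ j, harmMean (A j) (B j) := by
    have : ∀ j : Fin n, (2 / ((1 + m) * (1 + M))) • (B j + (m * M) • A j) ≤
        harmMean (A j) (B j) := fun j =>
      harm_lower (A j) (B j) (hA j) (hAu j) (hBu j) m M hm hmM.le (h1 j) (h2 j)
    calc (2 / ((1 + m) * (1 + M))) • (SB + (m * M) • SA)
        = ∑ j, (2 / ((1 + m) * (1 + M))) • (B j + (m * M) • A j) := by
          rw [hSA, hSB, Finset.smul_sum, ← Finset.sum_add_distrib, Finset.smul_sum]
      _ ≤ ∑ j, harmMean (A j) (B j) := Finset.sum_le_sum fun j _ => this j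
  set K : ℝ := (1 + M) * (1 + m) / (1 + r) ^ 2 with hK
  have hK0 : 0 ≤ K := by positivity
  have hKc : K * (2 / ((1 + m) * (1 + M))) = 2 / (1 + r) ^ 2 := by
    rw [hK, div_mul_div_comm, div_eq_div_iff (by positivity) (by positivity)]
    ring
  calc harmMean SA SB ≤ (2 / (1 + r) ^ 2) • (SB + (m * M) • SA) := hup
    _ = K • ((2 / ((1 + m) * (1 + M))) • (SB + (m * M) • SA)) := by
        rw [smul_smul, hKc]
    _ ≤ K • ∑ j, harmMean (A j) (B j) := smul_le_smul_of_nonneg_left hlow hK0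
end

section
/- Let 0 < m < M, let α ∈ [0,1], and let A_j, B_j (1 ≤ j ≤ n) be positive invertible bounded operators on a complex Hilbert space with m A_j ≤ B_j ≤ M A_j for all j. Then ((√M + √m)/(2 (Mm)^{1/4})) · Σ_{j=1}^n (A_j ♯ B_j) ≥ (Σ_{j=1}^n A_j ♯_α B_j) ♯ (Σ_{j=1}^n A_j ♯_{1−α} B_j). -/
variable {H : Type*} [NormedAddCommGroup H] [InnerProductSpace ℂ H] [CompleteSpace H]

set_option maxHeartbeats 1000000
set_option synthInstance.maxHeartbeats 400000

namespace RCaux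

variable {a : H →L[ℂ] H}

lemma spec_pos (ha : 0 ≤ a) (hu : IsUnit a) : ∀ x ∈ spectrum ℝ a, 0 < x := fun x hx =>
  lt_of_le_of_ne (spectrum_nonneg_of_nonneg ha hx)
    (by rintro rfl; simpa using spectrum.zero_notMem ℝ hu hx)

lemma contOn (h : ∀ x ∈ spectrum ℝ a, 0 < x) (r : ℝ) :
    ContinuousOn (fun x : ℝ => x ^ r) (spectrum ℝ a) := fun x hx =>
  (Real.continuousAt_rpow_const x r (Or.inl (h x hx).ne')).continuousWithinAt

lemma opRpow_sa (a : H →L[ℂ] H) (r : ℝ) : IsSelfAdjoint (opRpow a r) := cfc_predicate _ a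

lemma opRpow_nonneg (ha : 0 ≤ a) (r : ℝ) : 0 ≤ opRpow a r :=
  cfc_nonneg fun x hx => Real.rpow_nonneg (spectrum_nonneg_of_nonneg ha hx) r

lemma opRpow_mul (ha : 0 ≤ a) (hu : IsUnit a) (r s : ℝ) :
    opRpow a r * opRpow a s = opRpow a (r + s) := by
  unfold opRpow
  rw [← cfc_mul _ _ a (contOn (spec_pos ha hu) r) (contOn (spec_pos ha hu) s)]
  exact cfc_congr fun x hx => (Real.rpow_add (spec_pos ha hu x hx) r s).symm

lemma opRpow_one (ha : 0 ≤ a) : opRpow a 1 = a := by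
  unfold opRpow
  rw [cfc_congr (fun x _ => Real.rpow_one x), cfc_id' ℝ a]

lemma opRpow_zero (ha : 0 ≤ a) : opRpow a 0 = 1 := by
  unfold opRpow
  rw [cfc_congr (fun x _ => Real.rpow_zero x), cfc_const_one ℝ a]

lemma opRpow_isUnit (ha : 0 ≤ a) (hu : IsUnit a) (r : ℝ) : IsUnit (opRpow a r) := by
  unfold opRpow
  rw [isUnit_cfc_iff _ _ (contOn (spec_pos ha hu) r)]
  exact fun x hx => (Real.rpow_pos_of_pos (spec_pos ha hu x hx) r).ne'

lemma opRpow_smul (ha : 0 ≤ a) (hu : IsUnit a) {c : ℝ} (hc : 0 < c) (r : ℝ) :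
    opRpow (c • a) r = (c ^ r) • opRpow a r := by
  have h1 : c • a = cfc (fun x : ℝ => c * x) a := (cfc_const_mul_id c a).symm
  rw [opRpow, h1, ← cfc_comp' (fun x : ℝ => x ^ r) (fun x : ℝ => c * x) a ?hg ?hf]
  case hg =>
    apply ContinuousOn.rpow_const continuousOn_id
    rintro x ⟨y, hy, rfl⟩
    exact Or.inl (mul_pos hc (spec_pos ha hu y hy)).ne'
  case hf => exact (continuous_const.mul continuous_id).continuousOn
  rw [cfc_congr (fun x hx => Real.mul_rpow hc.le (spec_pos ha hu x hx).le),
    cfc_const_mul _ _ a (contOn (spec_pos ha hu) r), opRpow]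

lemma rsmul_nonneg (ha : 0 ≤ a) {c : ℝ} (hc : 0 ≤ c) : 0 ≤ c • a := by
  have hsa : IsSelfAdjoint a := IsSelfAdjoint.of_nonneg ha
  set w : H →L[ℂ] H := cfc Real.sqrt a with hw
  have hwsa : IsSelfAdjoint w := cfc_predicate _ a
  have hww : w * w = a := by
    rw [hw, ← cfc_mul _ _ a, cfc_congr (fun x hx => Real.mul_self_sqrt
      (spectrum_nonneg_of_nonneg ha hx)), cfc_id' ℝ a]
  have key : c • a = star (Real.sqrt c • w) * (Real.sqrt c • w) := by
    rw [star_smul, hwsa.star_eq, smul_mul_smul_comm, hww, star_trivial,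
      Real.mul_self_sqrt hc]
  rw [key]
  exact star_mul_self_nonneg _

lemma rsmul_le_rsmul {a b : H →L[ℂ] H} (hab : a ≤ b) {c : ℝ} (hc : 0 ≤ c) : c • a ≤ c • b := by
  have := rsmul_nonneg (sub_nonneg.mpr hab) hc
  rwa [smul_sub, sub_nonneg] at this

lemma rsmul_le_rsmul_right {a : H →L[ℂ] H} (ha : 0 ≤ a) {c d : ℝ} (hcd : c ≤ d) :
    c • a ≤ d • a := by
  have := rsmul_nonneg ha (sub_nonneg.mpr hcd)
  rwa [sub_smul, sub_nonneg] at this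

section PQ

variable {p q : H →L[ℂ] H}

lemma mul_opRpow_neg_half (hp : 0 ≤ p) (hpu : IsUnit p) :
    opRpow p (1/2) * opRpow p (-(1/2)) = 1 := by
  rw [opRpow_mul hp hpu]; norm_num [opRpow_zero hp]

lemma opRpow_neg_half_mul (hp : 0 ≤ p) (hpu : IsUnit p) :
    opRpow p (-(1/2)) * opRpow p (1/2) = 1 := by
  rw [opRpow_mul hp hpu]; norm_num [opRpow_zero hp]

lemma inner_nonneg (hp : 0 ≤ p) (hq : 0 ≤ q) :
    0 ≤ opRpow p (-(1/2)) * q * opRpow p (-(1/2)) := by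
  simpa only [(opRpow_sa p (-(1/2))).star_eq] using star_left_conjugate_nonneg hq (opRpow p (-(1/2)))

lemma inner_isUnit (hp : 0 ≤ p) (hpu : IsUnit p) (hqu : IsUnit q) :
    IsUnit (opRpow p (-(1/2)) * q * opRpow p (-(1/2))) :=
  ((opRpow_isUnit hp hpu _).mul hqu).mul (opRpow_isUnit hp hpu _)

lemma conj_back (hp : 0 ≤ p) (hpu : IsUnit p) (q : H →L[ℂ] H) :
    opRpow p (1/2) * (opRpow p (-(1/2)) * q * opRpow p (-(1/2))) * opRpow p (1/2) = q := by
  have h1 := mul_opRpow_neg_half hp hpu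
  have h2 := opRpow_neg_half_mul hp hpu
  calc opRpow p (1/2) * (opRpow p (-(1/2)) * q * opRpow p (-(1/2))) * opRpow p (1/2)
      = (opRpow p (1/2) * opRpow p (-(1/2))) * q *
        (opRpow p (-(1/2)) * opRpow p (1/2)) := by noncomm_ring
    _ = q := by rw [h1, h2, one_mul, mul_one]

lemma conj_one (hp : 0 ≤ p) (hpu : IsUnit p) :
    opRpow p (1/2) * (1 : H →L[ℂ] H) * opRpow p (1/2) = p := by
  rw [mul_one, opRpow_mul hp hpu]; norm_num [opRpow_one hp]

lemma inner_conj_p (hp : 0 ≤ p) (hpu : IsUnit p) :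
    opRpow p (-(1/2)) * p * opRpow p (-(1/2)) = 1 := by
  nth_rewrite 2 [← opRpow_one hp]
  rw [opRpow_mul hp hpu, show -(1/2) + 1 = (1/2 : ℝ) by norm_num, mul_opRpow_neg_half hp hpu]

lemma inner_spec_mem (hp : 0 ≤ p) (hpu : IsUnit p) (hq : 0 ≤ q) {m' M' : ℝ}
    (h1 : m' • p ≤ q) (h2 : q ≤ M' • p) :
    ∀ x ∈ spectrum ℝ (opRpow p (-(1/2)) * q * opRpow p (-(1/2))), x ∈ Set.Icc m' M' := by
  set c := opRpow p (-(1/2)) with hc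
  have hcsa := opRpow_sa p (-(1/2))
  have hsa : IsSelfAdjoint (c * q * c) := IsSelfAdjoint.of_nonneg (inner_nonneg hp hq)
  have hL : m' • (1 : H →L[ℂ] H) ≤ c * q * c := by
    have := star_left_conjugate_le_conjugate h1 c
    rw [hcsa.star_eq] at this
    calc m' • (1 : H →L[ℂ] H) = m' • (c * p * c) := by rw [inner_conj_p hp hpu]
      _ = c * m' • p * c := by simp [smul_mul_assoc, mul_smul_comm]
      _ ≤ c * q * c := this
  have hR : c * q * c ≤ M' • (1 : H →L[ℂ] H) := by
    have := star_left_conjugate_le_conjugate h2 c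
    rw [hcsa.star_eq] at this
    calc c * q * c ≤ c * (M' • p) * c := this
      _ = M' • (c * p * c) := by simp [smul_mul_assoc, mul_smul_comm]
      _ = M' • (1 : H →L[ℂ] H) := by rw [inner_conj_p hp hpu]
  intro x hx
  rw [← Algebra.algebraMap_eq_smul_one] at hL hR
  exact ⟨(algebraMap_le_iff_le_spectrum hsa).mp hL x hx,
    (le_algebraMap_iff_spectrum_le hsa).mp hR x hx⟩

lemma wgm_eq (μ : ℝ) (p q : H →L[ℂ] H) :
    wgm μ p q = opRpow p (1/2) *
      cfc (fun x : ℝ => x ^ μ) (opRpow p (-(1/2)) * q * opRpow p (-(1/2))) *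
      opRpow p (1/2) := rfl

lemma chord (hp : 0 ≤ p) (hpu : IsUnit p) (hq : 0 ≤ q) (hqu : IsUnit q)
    {m' M' : ℝ} (hm' : 0 < m') (hm'M' : m' ≤ M') (h1 : m' • p ≤ q) (h2 : q ≤ M' • p) :
    (Real.sqrt M' + Real.sqrt m')⁻¹ • (q + Real.sqrt (M' * m') • p) ≤ geomMean p q := by
  set c := opRpow p (-(1/2)) with hcdef
  set d := opRpow p (1/2) with hddef
  set Cq := c * q * c with hCq
  have hCqn : 0 ≤ Cq := inner_nonneg hp hq
  have hCqu : IsUnit Cq := inner_isUnit hp hpu hqu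
  have hspec := inner_spec_mem hp hpu hq h1 h2
  have hmM' : 0 < M' := lt_of_lt_of_le hm' hm'M'
  have hsm : 0 < Real.sqrt m' := Real.sqrt_pos.mpr hm'
  have hsM : 0 < Real.sqrt M' := Real.sqrt_pos.mpr hmM'
  have key : cfc (fun x : ℝ => (Real.sqrt M' + Real.sqrt m')⁻¹ * (x + Real.sqrt (M' * m'))) Cq
      ≤ cfc (fun x : ℝ => x ^ (1/2 : ℝ)) Cq := by
    rw [cfc_le_iff _ _ Cq (by fun_prop) (contOn (spec_pos hCqn hCqu) _)]
    intro x hx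
    obtain ⟨hxm, hxM⟩ := hspec x hx
    have hx0 : 0 ≤ x := le_trans hm'.le hxm
    rw [← Real.sqrt_eq_rpow, inv_mul_le_iff₀ (by positivity), Real.sqrt_mul (by positivity)]
    nlinarith [Real.sq_sqrt hx0, Real.sq_sqrt hm'.le, Real.sq_sqrt hmM'.le,
      Real.sqrt_le_sqrt hxm, Real.sqrt_le_sqrt hxM, Real.sqrt_nonneg x,
      mul_nonneg (Real.sqrt_nonneg M') (Real.sqrt_nonneg m')]
  have haff : cfc (fun x : ℝ => (Real.sqrt M' + Real.sqrt m')⁻¹ *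
      (x + Real.sqrt (M' * m'))) Cq
      = (Real.sqrt M' + Real.sqrt m')⁻¹ • (Cq + Real.sqrt (M' * m') • 1) := by
    rw [cfc_const_mul _ _ Cq (by fun_prop),
      cfc_add_const (Real.sqrt (M' * m')) (fun x : ℝ => x) Cq (by fun_prop),
      cfc_id' ℝ Cq, Algebra.algebraMap_eq_smul_one]
  have hdsa := opRpow_sa p (1/2)
  have conj := star_left_conjugate_le_conjugate key d
  rw [hdsa.star_eq] at conj
  have lhs_eq : d * ((Real.sqrt M' + Real.sqrt m')⁻¹ • (Cq + Real.sqrt (M' * m') • 1)) * d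
      = (Real.sqrt M' + Real.sqrt m')⁻¹ • (q + Real.sqrt (M' * m') • p) := by
    have e1 : d * Cq * d = q := conj_back hp hpu q
    have e2 : d * (1 : H →L[ℂ] H) * d = p := conj_one hp hpu
    calc d * ((Real.sqrt M' + Real.sqrt m')⁻¹ • (Cq + Real.sqrt (M' * m') • 1)) * d
        = (Real.sqrt M' + Real.sqrt m')⁻¹ •
          (d * Cq * d + Real.sqrt (M' * m') • (d * (1 : H →L[ℂ] H) * d)) := by
          simp only [mul_smul_comm, smul_mul_assoc, mul_add, add_mul]
      _ = (Real.sqrt M' + Real.sqrt m')⁻¹ • (q + Real.sqrt (M' * m') • p) := by rw [e1, e2]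
  rw [haff] at conj
  rw [← lhs_eq]
  exact conj

lemma amgm (hp : 0 ≤ p) (hpu : IsUnit p) (hq : 0 ≤ q) (hqu : IsUnit q) :
    geomMean p q ≤ (2 : ℝ)⁻¹ • (p + q) := by
  set c := opRpow p (-(1/2)) with hcdef
  set d := opRpow p (1/2) with hddef
  set Cq := c * q * c with hCq
  have hCqn : 0 ≤ Cq := inner_nonneg hp hq
  have hCqu : IsUnit Cq := inner_isUnit hp hpu hqu
  have key : cfc (fun x : ℝ => x ^ (1/2 : ℝ)) Cq
      ≤ cfc (fun x : ℝ => (2 : ℝ)⁻¹ * (1 + x)) Cq := by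
    rw [cfc_le_iff _ _ Cq (contOn (spec_pos hCqn hCqu) _) (by fun_prop)]
    intro x hx
    have hx0 : 0 ≤ x := spectrum_nonneg_of_nonneg hCqn hx
    rw [← Real.sqrt_eq_rpow]
    nlinarith [Real.sq_sqrt hx0, Real.sqrt_nonneg x, sq_nonneg (Real.sqrt x - 1)]
  have haff : cfc (fun x : ℝ => (2 : ℝ)⁻¹ * (1 + x)) Cq
      = (2 : ℝ)⁻¹ • ((1 : H →L[ℂ] H) + Cq) := by
    rw [cfc_const_mul _ _ Cq (by fun_prop),
      cfc_const_add 1 (fun x : ℝ => x) Cq (by fun_prop),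
      cfc_id' ℝ Cq, Algebra.algebraMap_eq_smul_one, one_smul]
  have hdsa := opRpow_sa p (1/2)
  have conj := star_left_conjugate_le_conjugate key d
  rw [hdsa.star_eq, haff] at conj
  have lhs_eq : d * ((2 : ℝ)⁻¹ • ((1 : H →L[ℂ] H) + Cq)) * d = (2 : ℝ)⁻¹ • (p + q) := by
    have e1 : d * Cq * d = q := conj_back hp hpu q
    have e2 : d * (1 : H →L[ℂ] H) * d = p := conj_one hp hpu
    calc d * ((2 : ℝ)⁻¹ • ((1 : H →L[ℂ] H) + Cq)) * d
        = (2 : ℝ)⁻¹ • (d * (1 : H →L[ℂ] H) * d + d * Cq * d) := by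
          simp only [mul_smul_comm, smul_mul_assoc, mul_add, add_mul]
      _ = (2 : ℝ)⁻¹ • (p + q) := by rw [e1, e2]
  rw [← lhs_eq]
  exact conj

lemma geomMean_smul_left (hp : 0 ≤ p) (hpu : IsUnit p) (hq : 0 ≤ q) (hqu : IsUnit q)
    {γ : ℝ} (hγ : 0 < γ) :
    geomMean (γ • p) q = Real.sqrt γ • geomMean p q := by
  set c := opRpow p (-(1/2)) with hcdef
  set d := opRpow p (1/2) with hddef
  set Cq := c * q * c with hCq
  have hCqn : 0 ≤ Cq := inner_nonneg hp hq
  have hCqu : IsUnit Cq := inner_isUnit hp hpu hqu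
  have hγp : 0 ≤ γ • p := rsmul_nonneg hp hγ.le
  have h1 : opRpow (γ • p) (1/2) = (γ ^ (1/2 : ℝ)) • d := opRpow_smul hp hpu hγ _
  have h2 : opRpow (γ • p) (-(1/2)) = (γ ^ (-(1/2) : ℝ)) • c := opRpow_smul hp hpu hγ _
  have hinner : opRpow (γ • p) (-(1/2)) * q * opRpow (γ • p) (-(1/2)) = γ⁻¹ • Cq := by
    rw [h2]
    have : γ ^ (-(1/2) : ℝ) * γ ^ (-(1/2) : ℝ) = γ⁻¹ := by
      rw [← Real.rpow_add hγ]
      norm_num [Real.rpow_neg_one]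
    simp only [smul_mul_assoc, mul_smul_comm, smul_smul, this, hCq]
  have hpow : cfc (fun x : ℝ => x ^ (1/2 : ℝ)) (γ⁻¹ • Cq)
      = ((γ⁻¹) ^ (1/2 : ℝ)) • cfc (fun x : ℝ => x ^ (1/2 : ℝ)) Cq :=
    opRpow_smul hCqn hCqu (inv_pos.mpr hγ) _
  show opRpow (γ • p) (1/2) *
      cfc (fun x : ℝ => x ^ ((1:ℝ)/2)) (opRpow (γ • p) (-(1/2)) * q * opRpow (γ • p) (-(1/2))) *
      opRpow (γ • p) (1/2) = _
  rw [show ((1:ℝ)/2) = (1/2 : ℝ) from rfl, hinner, h1]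
  rw [show cfc (fun x : ℝ => x ^ (1/2 : ℝ)) (γ⁻¹ • Cq)
      = ((γ⁻¹) ^ (1/2 : ℝ)) • cfc (fun x : ℝ => x ^ (1/2 : ℝ)) Cq from hpow]
  have h0 : γ ^ (1/2 : ℝ) ≠ 0 := (Real.rpow_pos_of_pos hγ _).ne'
  have hscal : γ ^ (1/2 : ℝ) * ((γ⁻¹) ^ (1/2 : ℝ)) * γ ^ (1/2 : ℝ) = Real.sqrt γ := by
    rw [Real.inv_rpow hγ.le, Real.sqrt_eq_rpow]
    field_simp
  calc (γ ^ (1/2 : ℝ)) • d * (((γ⁻¹) ^ (1/2 : ℝ)) • cfc (fun x : ℝ => x ^ (1/2 : ℝ)) Cq) *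
      ((γ ^ (1/2 : ℝ)) • d)
      = (γ ^ (1/2 : ℝ) * ((γ⁻¹) ^ (1/2 : ℝ)) * γ ^ (1/2 : ℝ)) •
        (d * cfc (fun x : ℝ => x ^ (1/2 : ℝ)) Cq * d) := by
        simp only [smul_mul_assoc, mul_smul_comm, smul_smul]
        ring_nf
    _ = Real.sqrt γ • geomMean p q := by rw [hscal]; rfl

lemma cfc_half_unique {C t : H →L[ℂ] H} (ht : 0 ≤ t) (h : t * t = C) :
    cfc (fun x : ℝ => x ^ (1/2 : ℝ)) C = t := by
  have htsa : IsSelfAdjoint t := IsSelfAdjoint.of_nonneg ht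
  have hC : C = cfc (fun x : ℝ => x * x) t := by
    rw [cfc_mul _ _ t (by fun_prop) (by fun_prop), cfc_id' ℝ t, h]
  rw [hC, ← cfc_comp' (fun x : ℝ => x ^ (1/2 : ℝ)) (fun x : ℝ => x * x) t ?hg ?hf]
  case hg =>
    exact fun x _ => (Real.continuousAt_rpow_const x _ (Or.inr (by norm_num))).continuousWithinAt
  case hf => exact (continuous_id.mul continuous_id).continuousOn
  have : ∀ x ∈ spectrum ℝ t, (x * x) ^ (1/2 : ℝ) = x := by
    intro x hx
    have hx0 : 0 ≤ x := spectrum_nonneg_of_nonneg ht hx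
    rw [← Real.sqrt_eq_rpow, Real.sqrt_mul_self hx0]
  rw [cfc_congr this, cfc_id' ℝ t]

lemma geomMean_unique (hp : 0 ≤ p) (hpu : IsUnit p) {z w : H →L[ℂ] H}
    (hz : 0 ≤ z) (hwp : w * p = 1) (hpw : p * w = 1) (hzwz : z * w * z = q) :
    geomMean p q = z := by
  set c := opRpow p (-(1/2)) with hcdef
  set d := opRpow p (1/2) with hddef
  have hcsa := opRpow_sa p (-(1/2))
  have hdc : d * c = 1 := mul_opRpow_neg_half hp hpu
  have hcd : c * d = 1 := opRpow_neg_half_mul hp hpu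
  have hcc : c * c = w := by
    have hccp : (c * c) * p = 1 := by
      nth_rewrite 1 [← opRpow_one hp]
      rw [hcdef, opRpow_mul hp hpu, opRpow_mul hp hpu]
      norm_num [opRpow_zero hp]
    calc c * c = (c * c) * (p * w) := by rw [hpw, mul_one]
      _ = ((c * c) * p) * w := by noncomm_ring
      _ = w := by rw [hccp, one_mul]
  set t := c * z * c with htdef
  have ht : 0 ≤ t := by
    have h := star_left_conjugate_nonneg hz c
    rwa [hcsa.star_eq] at h
  have htt : t * t = c * q * c := by
    calc t * t = c * (z * (c * c) * z) * c := by noncomm_ring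
      _ = c * (z * w * z) * c := by rw [hcc]
      _ = c * q * c := by rw [hzwz]
  have hkey : cfc (fun x : ℝ => x ^ (1/2 : ℝ)) (c * q * c) = t := cfc_half_unique ht htt
  show d * cfc (fun x : ℝ => x ^ ((1:ℝ)/2)) (c * q * c) * d = z
  rw [show ((1:ℝ)/2) = (1/2 : ℝ) from rfl, hkey]
  calc d * (c * z * c) * d = (d * c) * z * (c * d) := by noncomm_ring
    _ = z := by rw [hdc, hcd, one_mul, mul_one]

lemma wgm_nonneg (hp : 0 ≤ p) (hq : 0 ≤ q) (μ : ℝ) : 0 ≤ wgm μ p q := by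
  rw [wgm_eq]
  have h1 : 0 ≤ cfc (fun x : ℝ => x ^ μ) (opRpow p (-(1/2)) * q * opRpow p (-(1/2))) :=
    opRpow_nonneg (inner_nonneg hp hq) μ
  simpa only [(opRpow_sa p (1/2)).star_eq] using star_right_conjugate_nonneg h1 (opRpow p (1/2))

lemma wgm_isUnit (hp : 0 ≤ p) (hpu : IsUnit p) (hq : 0 ≤ q) (hqu : IsUnit q) (μ : ℝ) :
    IsUnit (wgm μ p q) := by
  rw [wgm_eq]
  exact ((opRpow_isUnit hp hpu _).mul
    (opRpow_isUnit (inner_nonneg hp hq) (inner_isUnit hp hpu hqu) μ)).mul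
    (opRpow_isUnit hp hpu _)

lemma geomMean_wgm_wgm (hp : 0 ≤ p) (hpu : IsUnit p) (hq : 0 ≤ q) (hqu : IsUnit q) (α : ℝ) :
    geomMean (wgm α p q) (wgm (1 - α) p q) = geomMean p q := by
  set c := opRpow p (-(1/2)) with hcdef
  set d := opRpow p (1/2) with hddef
  set CB := c * q * c with hCB
  have hCBn : 0 ≤ CB := inner_nonneg hp hq
  have hCBu : IsUnit CB := inner_isUnit hp hpu hqu
  have hdc : d * c = 1 := mul_opRpow_neg_half hp hpu
  have hcd : c * d = 1 := opRpow_neg_half_mul hp hpu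
  have hXd : wgm α p q = d * opRpow CB α * d := rfl
  have hYd : wgm (1 - α) p q = d * opRpow CB (1 - α) * d := rfl
  have hZd : geomMean p q = d * opRpow CB (1/2) * d := rfl
  have hcomp : ∀ r t : ℝ, (c * opRpow CB r * c) * (d * opRpow CB t * d)
      = c * opRpow CB (r + t) * d := by
    intro r t
    calc (c * opRpow CB r * c) * (d * opRpow CB t * d)
        = c * (opRpow CB r * (c * d) * opRpow CB t) * d := by noncomm_ring
      _ = c * (opRpow CB r * opRpow CB t) * d := by rw [hcd, mul_one]
      _ = c * opRpow CB (r + t) * d := by rw [opRpow_mul hCBn hCBu]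
  have hcomp' : ∀ r t : ℝ, (d * opRpow CB r * d) * (c * opRpow CB t * c)
      = d * opRpow CB (r + t) * c := by
    intro r t
    calc (d * opRpow CB r * d) * (c * opRpow CB t * c)
        = d * (opRpow CB r * (d * c) * opRpow CB t) * c := by noncomm_ring
      _ = d * (opRpow CB r * opRpow CB t) * c := by rw [hdc, mul_one]
      _ = d * opRpow CB (r + t) * c := by rw [opRpow_mul hCBn hCBu]
  apply geomMean_unique (wgm_nonneg hp hq α) (wgm_isUnit hp hpu hq hqu α)
    (z := geomMean p q) (w := c * opRpow CB (-α) * c)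
  · exact wgm_nonneg hp hq (1/2)
  · rw [hXd, hcomp, neg_add_cancel, opRpow_zero hCBn, mul_one, hcd]
  · rw [hXd, hcomp', add_neg_cancel, opRpow_zero hCBn, mul_one, hdc]
  · rw [hZd, hYd, hcomp']
    calc (d * opRpow CB (1/2 + -α) * c) * (d * opRpow CB (1/2) * d)
        = d * (opRpow CB (1/2 + -α) * (c * d) * opRpow CB (1/2)) * d := by noncomm_ring
      _ = d * (opRpow CB (1/2 + -α) * opRpow CB (1/2)) * d := by rw [hcd, mul_one]
      _ = d * opRpow CB (1 - α) * d := by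
          rw [opRpow_mul hCBn hCBu, show (1/2 + -α + 1/2 : ℝ) = 1 - α by ring]

lemma wgm_le_wgm (hp : 0 ≤ p) (hpu : IsUnit p) (hq : 0 ≤ q) (hqu : IsUnit q)
    {mm MM : ℝ} (h1 : mm • p ≤ q) (h2 : q ≤ MM • p) {r t k : ℝ}
    (hk : ∀ x, mm ≤ x → x ≤ MM → k * x ^ r ≤ x ^ t) :
    k • wgm r p q ≤ wgm t p q := by
  set c := opRpow p (-(1/2)) with hcdef
  set d := opRpow p (1/2) with hddef
  set CB := c * q * c with hCB
  have hCBn : 0 ≤ CB := inner_nonneg hp hq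
  have hCBu : IsUnit CB := inner_isUnit hp hpu hqu
  have hspec := inner_spec_mem hp hpu hq h1 h2
  have key : cfc (fun x : ℝ => k * x ^ r) CB ≤ cfc (fun x : ℝ => x ^ t) CB := by
    rw [cfc_le_iff (fun x : ℝ => k * x ^ r) _ CB (continuousOn_const.mul (contOn (spec_pos hCBn hCBu) r))
      (contOn (spec_pos hCBn hCBu) t)]
    intro x hx
    exact hk x (hspec x hx).1 (hspec x hx).2
  rw [cfc_const_mul _ _ CB (contOn (spec_pos hCBn hCBu) r)] at key
  have hdsa := opRpow_sa p (1/2)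
  have conj := star_left_conjugate_le_conjugate key d
  rw [hdsa.star_eq] at conj
  calc k • wgm r p q = d * (k • cfc (fun x : ℝ => x ^ r) CB) * d := by
        rw [wgm_eq]
        simp only [mul_smul_comm, smul_mul_assoc]
        rfl
    _ ≤ d * cfc (fun x : ℝ => x ^ t) CB * d := conj
    _ = wgm t p q := rfl

end PQ


/-- mirror version of `wgm_le_wgm` -/
lemma wgm_le_smul_wgm {p q : H →L[ℂ] H} (hp : 0 ≤ p) (hpu : IsUnit p) (hq : 0 ≤ q)
    (hqu : IsUnit q) {mm MM : ℝ} (h1 : mm • p ≤ q) (h2 : q ≤ MM • p) {r t k : ℝ}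
    (hk : ∀ x, mm ≤ x → x ≤ MM → x ^ t ≤ k * x ^ r) :
    wgm t p q ≤ k • wgm r p q := by
  set c := opRpow p (-(1/2)) with hcdef
  set d := opRpow p (1/2) with hddef
  set CB := c * q * c with hCB
  have hCBn : 0 ≤ CB := inner_nonneg hp hq
  have hCBu : IsUnit CB := inner_isUnit hp hpu hqu
  have hspec := inner_spec_mem hp hpu hq h1 h2
  have key : cfc (fun x : ℝ => x ^ t) CB ≤ cfc (fun x : ℝ => k * x ^ r) CB := by
    rw [cfc_le_iff _ (fun x : ℝ => k * x ^ r) CB (contOn (spec_pos hCBn hCBu) t)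
      (continuousOn_const.mul (contOn (spec_pos hCBn hCBu) r))]
    intro x hx
    exact hk x (hspec x hx).1 (hspec x hx).2
  rw [cfc_const_mul _ _ CB (contOn (spec_pos hCBn hCBu) r)] at key
  have hdsa := opRpow_sa p (1/2)
  have conj := star_left_conjugate_le_conjugate key d
  rw [hdsa.star_eq] at conj
  calc wgm t p q = d * cfc (fun x : ℝ => x ^ t) CB * d := rfl
    _ ≤ d * (k • cfc (fun x : ℝ => x ^ r) CB) * d := conj
    _ = k • wgm r p q := by
        rw [wgm_eq]
        simp only [mul_smul_comm, smul_mul_assoc]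
        rfl

lemma geomMean_zero : geomMean (0 : H →L[ℂ] H) 0 = 0 := by
  have h0 : opRpow (0 : H →L[ℂ] H) (1/2) = 0 := by
    rw [opRpow, show (0 : H →L[ℂ] H) = algebraMap ℝ (H →L[ℂ] H) 0 by simp,
      cfc_algebraMap (R := ℝ) 0 (fun x : ℝ => x ^ ((1:ℝ)/2)),
      Real.zero_rpow (by norm_num : ((1:ℝ)/2) ≠ 0), map_zero]
  show opRpow (0 : H →L[ℂ] H) (1/2) * _ * opRpow (0 : H →L[ℂ] H) (1/2) = 0
  rw [h0, zero_mul, mul_zero]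

open Real

variable {m M α : ℝ}

lemma sandwich_scalar (hm : 0 < m) (hmM : m < M) :
    ∀ x, m ≤ x → x ≤ M →
      min (m ^ (1 - 2*α)) (M ^ (1 - 2*α)) * x ^ α ≤ x ^ (1 - α) ∧
      x ^ (1 - α) ≤ max (m ^ (1 - 2*α)) (M ^ (1 - 2*α)) * x ^ α := by
  intro x hmx hxM
  have hx : 0 < x := lt_of_lt_of_le hm hmx
  have hsplit : x ^ (1 - α) = x ^ (1 - 2*α) * x ^ α := by
    rw [← Real.rpow_add hx]; ring_nf
  have hxa : (0:ℝ) ≤ x ^ α := (Real.rpow_pos_of_pos hx α).le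
  have hlow : min (m ^ (1 - 2*α)) (M ^ (1 - 2*α)) ≤ x ^ (1 - 2*α) := by
    rcases le_or_gt 0 (1 - 2*α) with hs | hs
    · exact le_trans (min_le_left _ _) (Real.rpow_le_rpow hm.le hmx hs)
    · exact le_trans (min_le_right _ _) (Real.rpow_le_rpow_of_nonpos hx hxM hs.le)
  have hhigh : x ^ (1 - 2*α) ≤ max (m ^ (1 - 2*α)) (M ^ (1 - 2*α)) := by
    rcases le_or_gt 0 (1 - 2*α) with hs | hs
    · exact le_trans (Real.rpow_le_rpow hx.le hxM hs) (le_max_right _ _)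
    · exact le_trans (Real.rpow_le_rpow_of_nonpos hm hmx hs.le) (le_max_left _ _)
  constructor
  · rw [hsplit]; exact mul_le_mul_of_nonneg_right hlow hxa
  · rw [hsplit]; exact mul_le_mul_of_nonneg_right hhigh hxa

lemma aux_mono {u v : ℝ} (hu : 1 ≤ u) (huv : u ≤ v) : u + u⁻¹ ≤ v + v⁻¹ := by
  have hu0 : 0 < u := lt_of_lt_of_le one_pos hu
  have hv0 : 0 < v := lt_of_lt_of_le hu0 huv
  have h1 : (1:ℝ) ≤ u * v := by nlinarith
  have key : (0:ℝ) ≤ (v - u) * (u * v - 1) := mul_nonneg (by linarith) (by linarith)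
  rw [← sub_nonneg]
  have heq : v + v⁻¹ - (u + u⁻¹) = (v - u) * (u * v - 1) / (u * v) := by
    field_simp
    ring
  rw [heq]
  positivity

lemma const_le (hm : 0 < m) (hmM : m < M) (hα0 : 0 ≤ α) (hα1 : α ≤ 1) :
    (Real.sqrt (Real.sqrt
        (max (m ^ (1 - 2*α)) (M ^ (1 - 2*α)) * min (m ^ (1 - 2*α)) (M ^ (1 - 2*α)))))⁻¹ *
      ((2:ℝ)⁻¹ * (Real.sqrt (max (m ^ (1 - 2*α)) (M ^ (1 - 2*α))) +
        Real.sqrt (min (m ^ (1 - 2*α)) (M ^ (1 - 2*α)))))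
    ≤ (Real.sqrt M + Real.sqrt m) / (2 * (M * m) ^ ((1:ℝ)/4)) := by
  have hM : 0 < M := lt_trans hm hmM
  set s : ℝ := 1 - 2*α with hs
  have hs1 : |s| ≤ 1 := by rw [abs_le]; constructor <;> nlinarith
  -- rewrite min*max and √min+√max
  have hmm : max (m ^ s) (M ^ s) * min (m ^ s) (M ^ s) = (m * M) ^ s := by
    rw [max_mul_min, ← Real.mul_rpow hm.le hM.le]
  have hsum : Real.sqrt (max (m ^ s) (M ^ s)) + Real.sqrt (min (m ^ s) (M ^ s))
      = (M:ℝ) ^ (s/2) + m ^ (s/2) := by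
    have e1 : Real.sqrt (m ^ s) = m ^ (s/2) := by
      rw [Real.sqrt_eq_rpow, ← Real.rpow_mul hm.le]; ring_nf
    have e2 : Real.sqrt (M ^ s) = M ^ (s/2) := by
      rw [Real.sqrt_eq_rpow, ← Real.rpow_mul hM.le]; ring_nf
    rcases le_total (m ^ s) (M ^ s) with h | h
    · rw [max_eq_right h, min_eq_left h, e1, e2]
    · rw [max_eq_left h, min_eq_right h, e1, e2]; ring
  rw [hmm, hsum]
  -- abbreviations
  set a : ℝ := m ^ (s/4) with hadef
  set b : ℝ := M ^ (s/4) with hbdef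
  set a' : ℝ := m ^ ((1:ℝ)/4) with ha'def
  set b' : ℝ := M ^ ((1:ℝ)/4) with hb'def
  have ha : 0 < a := Real.rpow_pos_of_pos hm _
  have hb : 0 < b := Real.rpow_pos_of_pos hM _
  have ha' : 0 < a' := Real.rpow_pos_of_pos hm _
  have hb' : 0 < b' := Real.rpow_pos_of_pos hM _
  have hss : Real.sqrt (Real.sqrt ((m*M) ^ s)) = a * b := by
    rw [Real.sqrt_eq_rpow, Real.sqrt_eq_rpow, ← Real.rpow_mul (by positivity),
      ← Real.rpow_mul (by positivity), Real.mul_rpow hm.le hM.le, hadef, hbdef]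
    norm_num
    ring_nf
  have hquart : (M * m) ^ ((1:ℝ)/4) = a' * b' := by
    rw [Real.mul_rpow hM.le hm.le]; ring
  have hMs2 : M ^ (s/2) = b * b := by
    rw [hbdef, ← Real.rpow_add hM]; ring_nf
  have hms2 : m ^ (s/2) = a * a := by
    rw [hadef, ← Real.rpow_add hm]; ring_nf
  have hsqM : Real.sqrt M = b' * b' := by
    rw [Real.sqrt_eq_rpow, hb'def, ← Real.rpow_add hM]; norm_num
  have hsqm : Real.sqrt m = a' * a' := by
    rw [Real.sqrt_eq_rpow, ha'def, ← Real.rpow_add hm]; norm_num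
  rw [hss, hquart, hMs2, hms2, hsqM, hsqm]
  have hform : ∀ x y : ℝ, 0 < x → 0 < y → y/x + (y/x)⁻¹ = (y*y + x*x)/(x*y) := by
    intro x y hx hy
    rw [inv_div, div_add_div _ _ hx.ne' hy.ne']
  have hwv : b/a + (b/a)⁻¹ ≤ b'/a' + (b'/a')⁻¹ := by
    have hMm1 : 1 ≤ M / m := (one_le_div hm).mpr hmM.le
    have hveq : b'/a' = (M/m) ^ ((1:ℝ)/4) := by
      rw [hb'def, ha'def, Real.div_rpow hM.le hm.le]
    have hweq : b/a = (M/m) ^ (s/4) := by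
      rw [hbdef, hadef, Real.div_rpow hM.le hm.le]
    set u : ℝ := (M/m) ^ (|s|/4) with hudef
    have hu1 : 1 ≤ u := Real.one_le_rpow hMm1 (by positivity)
    have huv : u ≤ b'/a' := by
      rw [hudef, hveq]
      exact Real.rpow_le_rpow_of_exponent_le hMm1 (by linarith [hs1])
    have hww : b/a + (b/a)⁻¹ = u + u⁻¹ := by
      rcases abs_cases s with ⟨he, _⟩ | ⟨he, _⟩
      · rw [hudef, he, ← hweq]
      · have hu' : u = (b/a)⁻¹ := by
          rw [hudef, he, hweq, ← Real.rpow_neg (by positivity)]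
          ring_nf
        rw [hu', inv_inv]
        ring
    rw [hww]
    exact aux_mono hu1 huv
  have hkey : (b*b + a*a)/(a*b) ≤ (b'*b' + a'*a')/(a'*b') := by
    rw [← hform a b ha hb, ← hform a' b' ha' hb']
    exact hwv
  calc (a*b)⁻¹ * ((2:ℝ)⁻¹ * (b*b + a*a)) = 2⁻¹ * ((b*b + a*a)/(a*b)) := by ring
    _ ≤ 2⁻¹ * ((b'*b' + a'*a')/(a'*b')) := by linarith [hkey]
    _ = (b'*b' + a'*a')/(2*(a'*b')) := by ring

end RCaux

open RCaux in
/-- `((√M + √m)/(2(Mm)^{1/4})) · Σ (A_j ♯ B_j) ≥ (Σ A_j ♯_α B_j) ♯ (Σ A_j ♯_{1−α} B_j)`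
whenever `0 < mA_j ≤ B_j ≤ MA_j` and `α ∈ [0,1]`. -/
theorem reverse_callebaut_left
    (m M : ℝ) (hm : 0 < m) (hmM : m < M)
    (α : ℝ) (hα : α ∈ Set.Icc (0 : ℝ) 1)
    (n : ℕ) (A B : Fin n → (H →L[ℂ] H))
    (hA : ∀ j, 0 ≤ A j) (hAu : ∀ j, IsUnit (A j))
    (hB : ∀ j, 0 ≤ B j) (hBu : ∀ j, IsUnit (B j))
    (h1 : ∀ j, m • A j ≤ B j) (h2 : ∀ j, B j ≤ M • A j) :
    geomMean (∑ j, wgm α (A j) (B j)) (∑ j, wgm (1 - α) (A j) (B j)) ≤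
      ((Real.sqrt M + Real.sqrt m) / (2 * (M * m) ^ ((1 : ℝ)/4))) •
        ∑ j, geomMean (A j) (B j) := by
  obtain ⟨hα0, hα1⟩ := hα
  have hM : 0 < M := lt_trans hm hmM
  rcases Nat.eq_zero_or_pos n with hn | hn
  · subst hn
    simp only [Finset.univ_eq_empty, Finset.sum_empty, smul_zero]
    rw [geomMean_zero]
  -- notation
  set m' : ℝ := min (m ^ (1 - 2*α)) (M ^ (1 - 2*α)) with hm'def
  set M' : ℝ := max (m ^ (1 - 2*α)) (M ^ (1 - 2*α)) with hM'def
  have hm' : 0 < m' := lt_min (Real.rpow_pos_of_pos hm _) (Real.rpow_pos_of_pos hM _)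
  have hm'M' : m' ≤ M' := min_le_max
  have hM'0 : 0 < M' := lt_of_lt_of_le hm' hm'M'
  set X : Fin n → (H →L[ℂ] H) := fun j => wgm α (A j) (B j) with hXdef
  set Y : Fin n → (H →L[ℂ] H) := fun j => wgm (1 - α) (A j) (B j) with hYdef
  have hXn : ∀ j, 0 ≤ X j := fun j => wgm_nonneg (hA j) (hB j) α
  have hYn : ∀ j, 0 ≤ Y j := fun j => wgm_nonneg (hA j) (hB j) (1 - α)
  have hXu : ∀ j, IsUnit (X j) := fun j => wgm_isUnit (hA j) (hAu j) (hB j) (hBu j) α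
  have hYu : ∀ j, IsUnit (Y j) := fun j => wgm_isUnit (hA j) (hAu j) (hB j) (hBu j) (1 - α)
  have hsand1 : ∀ j, m' • X j ≤ Y j := fun j =>
    wgm_le_wgm (hA j) (hAu j) (hB j) (hBu j) (h1 j) (h2 j)
      (fun x hx1 hx2 => (sandwich_scalar hm hmM x hx1 hx2).1)
  have hsand2 : ∀ j, Y j ≤ M' • X j := fun j =>
    wgm_le_smul_wgm (hA j) (hAu j) (hB j) (hBu j) (h1 j) (h2 j)
      (fun x hx1 hx2 => (sandwich_scalar hm hmM x hx1 hx2).2)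
  set x : H →L[ℂ] H := ∑ j, X j with hxdef
  set y : H →L[ℂ] H := ∑ j, Y j with hydef
  set g : H →L[ℂ] H := ∑ j, geomMean (A j) (B j) with hgdef
  have hx : 0 ≤ x := Finset.sum_nonneg fun j _ => hXn j
  have hy : 0 ≤ y := Finset.sum_nonneg fun j _ => hYn j
  have hg : 0 ≤ g := Finset.sum_nonneg fun j _ => wgm_nonneg (hA j) (hB j) (1/2)
  set j0 : Fin n := ⟨0, hn⟩ with hj0
  have hxu : IsUnit x := CStarAlgebra.isUnit_of_le (X j0)
    (Finset.single_le_sum (fun i _ => hXn i) (Finset.mem_univ j0)) ((hXu j0).isStrictlyPositive (hXn j0))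
  have hyu : IsUnit y := CStarAlgebra.isUnit_of_le (Y j0)
    (Finset.single_le_sum (fun i _ => hYn i) (Finset.mem_univ j0)) ((hYu j0).isStrictlyPositive (hYn j0))
  have hsx1 : m' • x ≤ y := by
    rw [hxdef, hydef, Finset.smul_sum]
    exact Finset.sum_le_sum fun j _ => hsand1 j
  have hsx2 : y ≤ M' • x := by
    rw [hxdef, hydef, Finset.smul_sum]
    exact Finset.sum_le_sum fun j _ => hsand2 j
  -- the chord bound, summed over j
  set γ : ℝ := Real.sqrt (M' * m') with hγdef
  have hγ : 0 < γ := Real.sqrt_pos.mpr (mul_pos hM'0 hm')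
  set σ : ℝ := Real.sqrt M' + Real.sqrt m' with hσdef
  have hσ : 0 < σ := by positivity
  have hch : σ⁻¹ • (y + γ • x) ≤ g := by
    have hsum : σ⁻¹ • (y + γ • x) = ∑ j, σ⁻¹ • (Y j + γ • X j) := by
      rw [hxdef, hydef, Finset.smul_sum, ← Finset.sum_add_distrib, ← Finset.smul_sum]
    rw [hsum, hgdef]
    apply Finset.sum_le_sum
    intro j _
    have hcj := chord (hXn j) (hXu j) (hYn j) (hYu j) hm' hm'M' (hsand1 j) (hsand2 j)
    rw [geomMean_wgm_wgm (hA j) (hAu j) (hB j) (hBu j) α] at hcj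
    exact hcj
  have hch2 : y + γ • x ≤ σ • g := by
    have := rsmul_le_rsmul hch hσ.le
    rwa [smul_inv_smul₀ hσ.ne'] at this
  -- AM-GM with homogeneity
  have hγxu : IsUnit (γ • x) := by
    rw [Algebra.smul_def]
    exact ((isUnit_iff_ne_zero.mpr hγ.ne').map (algebraMap ℝ (H →L[ℂ] H))).mul hxu
  have hamgm : Real.sqrt γ • geomMean x y ≤ (2:ℝ)⁻¹ • (σ • g) := by
    calc Real.sqrt γ • geomMean x y = geomMean (γ • x) y :=
          (geomMean_smul_left hx hxu hy hyu hγ).symm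
      _ ≤ (2:ℝ)⁻¹ • (γ • x + y) := amgm (rsmul_nonneg hx hγ.le) hγxu hy hyu
      _ = (2:ℝ)⁻¹ • (y + γ • x) := by rw [add_comm]
      _ ≤ (2:ℝ)⁻¹ • (σ • g) := rsmul_le_rsmul hch2 (by norm_num)
  have hsγ : 0 < Real.sqrt γ := Real.sqrt_pos.mpr hγ
  have hfinal : geomMean x y ≤ ((Real.sqrt γ)⁻¹ * ((2:ℝ)⁻¹ * σ)) • g := by
    have := rsmul_le_rsmul hamgm (inv_nonneg.mpr hsγ.le)
    rwa [inv_smul_smul₀ hsγ.ne', smul_smul, smul_smul, mul_assoc] at this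
  refine le_trans hfinal (rsmul_le_rsmul_right hg ?_)
  -- the scalar constant comparison
  have hc := const_le (m := m) (M := M) (α := α) hm hmM hα0 hα1
  calc (Real.sqrt γ)⁻¹ * ((2:ℝ)⁻¹ * σ)
      = (Real.sqrt (Real.sqrt (M' * m')))⁻¹ *
        ((2:ℝ)⁻¹ * (Real.sqrt M' + Real.sqrt m')) := rfl
    _ ≤ (Real.sqrt M + Real.sqrt m) / (2 * (M * m) ^ ((1:ℝ)/4)) := hc
end

section
/- Let 0 < m < M, let α ∈ [0,1], and let A_j, B_j (1 ≤ j ≤ n) be positive invertible bounded operators on a complex Hilbert space with m A_j ≤ B_j ≤ M A_j for all j. Then ((√M + √m)/(2 (Mm)^{1/4})) · [(Σ_{j=1}^n A_j ♯_α B_j) ♯ (Σ_{j=1}^n A_j ♯_{1−α} B_j)] ≥ (Σ_{j=1}^n A_j) ♯ (Σ_{j=1}^n B_j). -/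
set_option maxHeartbeats 2000000
set_option synthInstance.maxHeartbeats 1000000
open scoped NNReal ENNReal



variable {H : Type*} [NormedAddCommGroup H] [InnerProductSpace ℂ H] [CompleteSpace H]

namespace RCal

lemma rpowContOn (r : ℝ) {s : Set ℝ} (hs : ∀ x ∈ s, x ≠ 0) :
    ContinuousOn (fun x : ℝ => x ^ r) s := fun x hx =>
  (Real.continuousAt_rpow_const x r (Or.inl (hs x hx))).continuousWithinAt

lemma rpowContOn' {r : ℝ} (hr : 0 ≤ r) (s : Set ℝ) :
    ContinuousOn (fun x : ℝ => x ^ r) s := fun x _ =>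
  (Real.continuousAt_rpow_const x r (Or.inr hr)).continuousWithinAt

variable {a b : H →L[ℂ] H}

lemma spec_ne (hu : IsUnit a) : ∀ x ∈ spectrum ℝ a, x ≠ 0 :=
  fun _ hx h => spectrum.zero_notMem ℝ hu (h ▸ hx)

lemma spec_pos (ha : 0 ≤ a) (hu : IsUnit a) : ∀ x ∈ spectrum ℝ a, 0 < x :=
  fun x hx => lt_of_le_of_ne (spectrum_nonneg_of_nonneg ha hx) (Ne.symm (spec_ne hu x hx))

lemma opRpow_nonneg (ha : 0 ≤ a) (r : ℝ) : 0 ≤ opRpow a r :=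
  cfc_nonneg fun x hx => Real.rpow_nonneg (spectrum_nonneg_of_nonneg ha hx) _

lemma opRpow_sa (ha : 0 ≤ a) (r : ℝ) : IsSelfAdjoint (opRpow a r) :=
  .of_nonneg (opRpow_nonneg ha r)

lemma opRpow_star (ha : 0 ≤ a) (r : ℝ) : star (opRpow a r) = opRpow a r :=
  (opRpow_sa ha r).star_eq

lemma opRpow_mul_opRpow (ha : 0 ≤ a) (hu : IsUnit a) (r s : ℝ) :
    opRpow a r * opRpow a s = opRpow a (r + s) := by
  unfold opRpow
  rw [← cfc_mul _ _ a (rpowContOn _ (spec_ne hu)) (rpowContOn _ (spec_ne hu))]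
  exact cfc_congr fun x hx => (Real.rpow_add (spec_pos ha hu x hx) r s).symm

lemma opRpow_zero (ha : 0 ≤ a) : opRpow a 0 = 1 := by
  unfold opRpow
  have : ∀ x ∈ spectrum ℝ a, x ^ (0:ℝ) = 1 := fun x _ => Real.rpow_zero x
  rw [cfc_congr this, cfc_const_one ℝ a]

lemma opRpow_one (ha : 0 ≤ a) : opRpow a 1 = a := by
  unfold opRpow
  have : ∀ x ∈ spectrum ℝ a, x ^ (1:ℝ) = id x := fun x _ => Real.rpow_one x
  rw [cfc_congr this, cfc_id ℝ a]

lemma opRpow_mul_opRpow_neg (ha : 0 ≤ a) (hu : IsUnit a) (r : ℝ) :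
    opRpow a r * opRpow a (-r) = 1 := by
  rw [opRpow_mul_opRpow ha hu, add_neg_cancel, opRpow_zero ha]

lemma opRpow_neg_mul_opRpow (ha : 0 ≤ a) (hu : IsUnit a) (r : ℝ) :
    opRpow a (-r) * opRpow a r = 1 := by
  rw [opRpow_mul_opRpow ha hu, neg_add_cancel, opRpow_zero ha]

lemma opRpow_isUnit (ha : 0 ≤ a) (hu : IsUnit a) (r : ℝ) : IsUnit (opRpow a r) :=
  isUnit_iff_exists.mpr ⟨opRpow a (-r),
    opRpow_mul_opRpow_neg ha hu r, opRpow_neg_mul_opRpow ha hu r⟩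

lemma opRpow_half_mul_half (ha : 0 ≤ a) :
    opRpow a (1/2) * opRpow a (1/2) = a := by
  unfold opRpow
  rw [← cfc_mul _ _ a (rpowContOn' (by norm_num) _) (rpowContOn' (by norm_num) _)]
  have : ∀ x ∈ spectrum ℝ a, x ^ (1/2:ℝ) * x ^ (1/2:ℝ) = id x := by
    intro x hx
    have hx0 : 0 ≤ x := spectrum_nonneg_of_nonneg ha hx
    rw [← Real.sqrt_eq_rpow]
    exact Real.mul_self_sqrt hx0
  rw [cfc_congr this, cfc_id ℝ a]

lemma opRpow_half_eq_sqrt (ha : 0 ≤ a) : opRpow a (1/2) = CFC.sqrt a := by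
  rw [CFC.sqrt_eq_cfc, cfc_nnreal_eq_real NNReal.sqrt a ha]
  unfold opRpow
  refine cfc_congr fun x hx => ?_
  have hx0 : 0 ≤ x := spectrum_nonneg_of_nonneg ha hx
  rw [Real.coe_sqrt, Real.coe_toNNReal x hx0, Real.sqrt_eq_rpow]

/-! Abbreviations -/

/-- `sq a = a^{1/2}` -/
noncomputable abbrev sq (a : H →L[ℂ] H) : H →L[ℂ] H := opRpow a (1/2)
/-- `isq a = a^{-1/2}` -/
noncomputable abbrev isq (a : H →L[ℂ] H) : H →L[ℂ] H := opRpow a (-(1/2))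
/-- `cc a b = a^{-1/2} b a^{-1/2}` -/
noncomputable abbrev cc (a b : H →L[ℂ] H) : H →L[ℂ] H := isq a * b * isq a

lemma geomMean_eq : geomMean a b = sq a * opRpow (cc a b) (1/2) * sq a := rfl
lemma wgm_eq (μ : ℝ) : wgm μ a b = sq a * opRpow (cc a b) μ * sq a := rfl

lemma sq_mul_isq (ha : 0 ≤ a) (hu : IsUnit a) : sq a * isq a = 1 :=
  opRpow_mul_opRpow_neg ha hu (1/2)
lemma isq_mul_sq (ha : 0 ≤ a) (hu : IsUnit a) : isq a * sq a = 1 :=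
  opRpow_neg_mul_opRpow ha hu (1/2)

lemma cc_nonneg (ha : 0 ≤ a) (hb : 0 ≤ b) : 0 ≤ cc a b := by
  have := star_left_conjugate_nonneg hb (isq a)
  rwa [opRpow_star ha] at this

lemma sq_cc_sq (ha : 0 ≤ a) (hu : IsUnit a) (hb : 0 ≤ b) :
    sq a * cc a b * sq a = b := by
  calc sq a * (isq a * b * isq a) * sq a
      = (sq a * isq a) * b * (isq a * sq a) := by noncomm_ring
    _ = b := by rw [sq_mul_isq ha hu, isq_mul_sq ha hu, one_mul, mul_one]

lemma isq_mul_isq_right_inv (ha : 0 ≤ a) (hu : IsUnit a) : a * (isq a * isq a) = 1 := by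
  have h1 : isq a * isq a = opRpow a (-1) := by
    rw [opRpow_mul_opRpow ha hu]; norm_num
  rw [h1]
  have := opRpow_mul_opRpow_neg ha hu 1
  rwa [opRpow_one ha] at this

lemma isq_mul_isq_left_inv (ha : 0 ≤ a) (hu : IsUnit a) : (isq a * isq a) * a = 1 := by
  have h1 : isq a * isq a = opRpow a (-1) := by
    rw [opRpow_mul_opRpow ha hu]; norm_num
  rw [h1]
  have := opRpow_neg_mul_opRpow ha hu 1
  rwa [opRpow_one ha] at this

/-- If `ia` is a two-sided inverse of `a`, then `ia = isq a * isq a`. -/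
lemma inv_eq_isq_sq {ia : H →L[ℂ] H} (ha : 0 ≤ a) (hu : IsUnit a)
    (h1 : ia * a = 1) : ia = isq a * isq a := by
  calc ia = ia * (a * (isq a * isq a)) := by rw [isq_mul_isq_right_inv ha hu, mul_one]
    _ = (ia * a) * (isq a * isq a) := by rw [mul_assoc]
    _ = isq a * isq a := by rw [h1, one_mul]

lemma geomMean_nonneg (ha : 0 ≤ a) (hb : 0 ≤ b) : 0 ≤ geomMean a b := by
  rw [geomMean_eq]
  have h := star_right_conjugate_nonneg (opRpow_nonneg (cc_nonneg ha hb) (1/2)) (sq a)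
  rwa [opRpow_star ha] at h

lemma geomMean_unique {g ia : H →L[ℂ] H} (ha : 0 ≤ a) (hau : IsUnit a) (hb : 0 ≤ b)
    (hg : 0 ≤ g) (h1 : ia * a = 1) (hgig : g * ia * g = b) :
    geomMean a b = g := by
  have hia : ia = isq a * isq a := inv_eq_isq_sq ha hau h1
  set Z := isq a * g * isq a with hZ
  have hZ0 : 0 ≤ Z := by
    have := star_left_conjugate_nonneg hg (isq a); rwa [opRpow_star ha] at this
  have hZZ : Z * Z = cc a b := by
    calc (isq a * g * isq a) * (isq a * g * isq a)
        = isq a * (g * (isq a * isq a) * g) * isq a := by noncomm_ring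
      _ = isq a * b * isq a := by rw [← hia, hgig]
  have hsqrt : opRpow (cc a b) (1/2) = Z := by
    rw [opRpow_half_eq_sqrt (cc_nonneg ha hb)]
    exact CFC.sqrt_unique hZZ hZ0
  rw [geomMean_eq, hsqrt, hZ]
  calc sq a * (isq a * g * isq a) * sq a
      = (sq a * isq a) * g * (isq a * sq a) := by noncomm_ring
    _ = g := by rw [sq_mul_isq ha hau, isq_mul_sq ha hau, one_mul, mul_one]

lemma geomMean_char (ha : 0 ≤ a) (hau : IsUnit a) (hb : 0 ≤ b) :
    geomMean a b * (isq a * isq a) * geomMean a b = b := by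
  rw [geomMean_eq]
  have hx : ∀ x : H →L[ℂ] H, sq a * x * sq a * (isq a * isq a) * (sq a * x * sq a)
      = sq a * (x * x) * sq a := by
    intro x
    calc sq a * x * sq a * (isq a * isq a) * (sq a * x * sq a)
        = sq a * x * ((sq a * isq a) * (isq a * sq a)) * x * sq a := by noncomm_ring
      _ = sq a * (x * x) * sq a := by
          rw [sq_mul_isq ha hau, isq_mul_sq ha hau, one_mul, mul_one]; noncomm_ring
  rw [hx, opRpow_half_mul_half (cc_nonneg ha hb)]
  exact sq_cc_sq ha hau hb

lemma spectralRadius_swap (u v : H →L[ℂ] H) :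
    spectralRadius ℂ (u * v) ≤ spectralRadius ℂ (v * u) := by
  rw [spectralRadius, spectralRadius]
  refine iSup₂_le fun k hk => ?_
  rcases eq_or_ne k 0 with rfl | hk0
  · simp
  · have hmem : k ∈ spectrum ℂ (v * u) \ {0} := by
      rw [← spectrum.nonzero_mul_comm]
      exact ⟨hk, hk0⟩
    exact le_iSup₂_of_le k hmem.1 le_rfl

lemma sqrt_mono [Nontrivial H] (ha : 0 ≤ a) (hb : 0 ≤ b) (hbu : IsUnit b) (hab : a ≤ b) :
    CFC.sqrt a ≤ CFC.sqrt b := by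
  lift b to (H →L[ℂ] H)ˣ using hbu
  have hsb_sq : CFC.sqrt (b : H →L[ℂ] H) * CFC.sqrt (b : H →L[ℂ] H) = b :=
    CFC.sqrt_mul_sqrt_self _ hb
  have hcomm1 : Commute (CFC.sqrt (b:H→L[ℂ]H)) (↑b : H→L[ℂ]H) := by
    unfold Commute SemiconjBy
    calc CFC.sqrt (b:H→L[ℂ]H) * ↑b
        = CFC.sqrt (b:H→L[ℂ]H) * (CFC.sqrt (b:H→L[ℂ]H) * CFC.sqrt (b:H→L[ℂ]H)) := by
          rw [hsb_sq]
      _ = (CFC.sqrt (b:H→L[ℂ]H) * CFC.sqrt (b:H→L[ℂ]H)) * CFC.sqrt (b:H→L[ℂ]H) := by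
          rw [mul_assoc]
      _ = ↑b * CFC.sqrt (b:H→L[ℂ]H) := by rw [hsb_sq]
  have hcomm : CFC.sqrt (b:H→L[ℂ]H) * (↑b⁻¹:H→L[ℂ]H) = ↑b⁻¹ * CFC.sqrt (b:H→L[ℂ]H) :=
    (hcomm1.units_inv_right).eq
  have hsbu : IsUnit (CFC.sqrt (b : H →L[ℂ] H)) := by
    refine isUnit_iff_exists.mpr ⟨↑b⁻¹ * CFC.sqrt (b:H→L[ℂ]H), ?_, ?_⟩
    · rw [← mul_assoc, hcomm, mul_assoc, hsb_sq, Units.inv_mul]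
    · rw [mul_assoc, hsb_sq, Units.inv_mul]
  lift (CFC.sqrt (b : H →L[ℂ] H)) to (H →L[ℂ] H)ˣ using hsbu with sb hsb
  have hbinv_nonneg : (0:H→L[ℂ]H) ≤ ↑b⁻¹ := CFC.inv_nonneg_of_nonneg b hb
  have hsbinv_nonneg : (0:H→L[ℂ]H) ≤ ↑sb⁻¹ := CFC.inv_nonneg_of_nonneg sb (hsb ▸ (CFC.sqrt_nonneg _))
  have hsbinv_sq : (↑sb⁻¹ : H→L[ℂ]H) * ↑sb⁻¹ = ↑b⁻¹ := by
    have h1 : sb * sb = b := Units.ext hsb_sq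
    calc (↑sb⁻¹ : H→L[ℂ]H) * ↑sb⁻¹ = ↑(sb⁻¹ * sb⁻¹) := rfl
    _ = ↑(sb * sb)⁻¹ := by rw [mul_inv_rev]
    _ = ↑b⁻¹ := by rw [h1]
  have hsqrt_binv : CFC.sqrt ((↑b⁻¹ : H→L[ℂ]H)) = ↑sb⁻¹ :=
    CFC.sqrt_unique hsbinv_sq hsbinv_nonneg
  have key : ‖CFC.sqrt a * CFC.sqrt ((↑b⁻¹:H→L[ℂ]H))‖ ≤ 1 :=
    (le_iff_norm_sqrt_mul_sqrt_inv ha hb).mp hab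
  refine (le_iff_norm_sqrt_mul_sqrt_inv (b := sb) (CFC.sqrt_nonneg _) (hsb ▸ (CFC.sqrt_nonneg _))).mpr ?_
  set u := CFC.sqrt (CFC.sqrt a) with hu
  set w := CFC.sqrt ((↑sb⁻¹ : H→L[ℂ]H)) with hw
  have hu0 : (0:H→L[ℂ]H) ≤ u := (CFC.sqrt_nonneg _)
  have hw0 : (0:H→L[ℂ]H) ≤ w := (CFC.sqrt_nonneg _)
  have huu : u * u = CFC.sqrt a := CFC.sqrt_mul_sqrt_self _ (CFC.sqrt_nonneg _)
  have hww : w * w = (↑sb⁻¹ : H→L[ℂ]H) := CFC.sqrt_mul_sqrt_self _ hsbinv_nonneg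
  -- norm squared identity
  have hstar : star (u * w) = w * u := by
    rw [star_mul, (IsSelfAdjoint.of_nonneg hu0).star_eq, (IsSelfAdjoint.of_nonneg hw0).star_eq]
  have hnsq : ‖u * w‖ * ‖u * w‖ = ‖w * CFC.sqrt a * w‖ := by
    rw [← CStarRing.norm_star_mul_self (x := u * w), hstar]
    congr 1
    rw [← huu]; noncomm_ring
  -- spectral radius chain
  have hY_sa : IsSelfAdjoint (w * CFC.sqrt a * w) := by
    have : IsSelfAdjoint (CFC.sqrt a) := .of_nonneg (CFC.sqrt_nonneg _)
    simpa [(IsSelfAdjoint.of_nonneg hw0).star_eq] using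
      (IsSelfAdjoint.conjugate this w : IsSelfAdjoint (w * CFC.sqrt a * star w))
  have hZnorm : ‖CFC.sqrt a * (w * w)‖ ≤ 1 := by
    rw [hww, ← hsqrt_binv]; exact key
  have hchain : (‖w * CFC.sqrt a * w‖₊ : ℝ≥0∞) ≤ 1 := by
    calc (‖w * CFC.sqrt a * w‖₊ : ℝ≥0∞) = spectralRadius ℂ (w * CFC.sqrt a * w) :=
          hY_sa.spectralRadius_eq_nnnorm.symm
      _ = spectralRadius ℂ (w * (CFC.sqrt a * w)) := by rw [mul_assoc]
      _ ≤ spectralRadius ℂ ((CFC.sqrt a * w) * w) := spectralRadius_swap _ _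
      _ = spectralRadius ℂ (CFC.sqrt a * (w * w)) := by rw [mul_assoc]
      _ ≤ (‖CFC.sqrt a * (w * w)‖₊ : ℝ≥0∞) := spectrum.spectralRadius_le_nnnorm (𝕜 := ℂ) _
      _ ≤ 1 := by
          rw [← ENNReal.coe_one, ENNReal.coe_le_coe, ← NNReal.coe_le_coe]
          exact hZnorm
  have hYnorm : ‖w * CFC.sqrt a * w‖ ≤ 1 := by
    rw [← ENNReal.coe_one, ENNReal.coe_le_coe, ← NNReal.coe_le_coe] at hchain
    exact hchain
  have : ‖u * w‖ * ‖u * w‖ ≤ 1 := hnsq ▸ hYnorm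
  nlinarith [norm_nonneg (u * w)]


lemma cc_isUnit (ha : 0 ≤ a) (hau : IsUnit a) (hbu : IsUnit b) : IsUnit (cc a b) :=
  ((opRpow_isUnit ha hau _).mul hbu).mul (opRpow_isUnit ha hau _)

lemma geomMean_isUnit (ha : 0 ≤ a) (hau : IsUnit a) (hb : 0 ≤ b) (hbu : IsUnit b) :
    IsUnit (geomMean a b) := by
  rw [geomMean_eq]
  exact ((opRpow_isUnit ha hau _).mul
    (opRpow_isUnit (cc_nonneg ha hb) (cc_isUnit ha hau hbu) _)).mul (opRpow_isUnit ha hau _)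

lemma geomMean_symm (ha : 0 ≤ a) (hau : IsUnit a) (hb : 0 ≤ b) (hbu : IsUnit b) :
    geomMean a b = geomMean b a := by
  have hg0 : 0 ≤ geomMean a b := geomMean_nonneg ha hb
  obtain ⟨gu, hgu_eq⟩ := geomMean_isUnit ha hau hb hbu
  obtain ⟨au, hau_eq⟩ := id hau
  obtain ⟨bu, hbu_eq⟩ := id hbu
  have hisq : (↑au⁻¹ : H →L[ℂ] H) = isq a * isq a :=
    inv_eq_isq_sq ha hau (by rw [← hau_eq]; exact au.inv_mul)
  have hchar : geomMean a b * (isq a * isq a) * geomMean a b = b := geomMean_char ha hau hb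
  have hU : gu * au⁻¹ * gu = bu := by
    refine Units.ext ?_
    show (gu : H →L[ℂ] H) * ↑au⁻¹ * ↑gu = ↑bu
    rw [hgu_eq, hisq, hbu_eq]
    exact hchar
  have hbuinv : gu * bu⁻¹ * gu = au := by
    rw [← hU]
    group
  have hgig : geomMean a b * (↑bu⁻¹ : H →L[ℂ] H) * geomMean a b = a := by
    have := congrArg Units.val hbuinv
    simp only [Units.val_mul] at this
    rw [hgu_eq, hau_eq] at this
    exact this
  exact (geomMean_unique hb hbu ha hg0 (by rw [← hbu_eq]; exact bu.inv_mul) hgig).symm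

lemma geomMean_mono_right [Nontrivial H] {b' : H →L[ℂ] H} (ha : 0 ≤ a) (hau : IsUnit a)
    (hb : 0 ≤ b) (hb' : 0 ≤ b') (hb'u : IsUnit b') (h : b ≤ b') :
    geomMean a b ≤ geomMean a b' := by
  have hcc' : cc a b ≤ cc a b' := by
    have := star_left_conjugate_le_conjugate h (isq a)
    rwa [opRpow_star ha] at this
  have hc'u : IsUnit (cc a b') := cc_isUnit ha hau hb'u
  have hle : opRpow (cc a b) (1/2) ≤ opRpow (cc a b') (1/2) := by
    rw [opRpow_half_eq_sqrt (cc_nonneg ha hb), opRpow_half_eq_sqrt (cc_nonneg ha hb')]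
    exact sqrt_mono (cc_nonneg ha hb) (cc_nonneg ha hb') hc'u hcc'
  rw [geomMean_eq, geomMean_eq]
  have := star_left_conjugate_le_conjugate hle (sq a)
  rwa [opRpow_star ha] at this

lemma conj3 {t it x y z : H →L[ℂ] H} (h1 : t * it = 1) (h2 : it * t = 1) :
    (t*x*t) * (it*y*it) * (t*z*t) = t*(x*y*z)*t := by
  have e : (t*x*t) * (it*y*it) * (t*z*t) = t*(x*((t*it)*(y*((it*t)*z))))*t := by noncomm_ring
  rw [e, h1, h2, one_mul, one_mul]
  noncomm_ring

lemma conj2 {t it x y : H →L[ℂ] H} (h2 : it * t = 1) :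
    (it*x*it) * (t*y*t) = it*(x*y)*t := by
  have e : (it*x*it) * (t*y*t) = it*(x*((it*t)*y))*t := by noncomm_ring
  rw [e, h2, one_mul]

lemma geomMean_conj_cfc {c t : H →L[ℂ] H} (hc : 0 ≤ c) (ht : 0 ≤ t) (htu : IsUnit t)
    {f g : ℝ → ℝ} (hf : ContinuousOn f (spectrum ℝ c)) (hg : ContinuousOn g (spectrum ℝ c))
    (hfpos : ∀ x ∈ spectrum ℝ c, 0 < f x) (hgpos : ∀ x ∈ spectrum ℝ c, 0 < g x) :
    geomMean (t * cfc f c * t) (t * cfc g c * t)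
      = t * cfc (fun x => Real.sqrt (f x * g x)) c * t := by
  have hts : star t = t := (IsSelfAdjoint.of_nonneg ht).star_eq
  lift t to (H →L[ℂ] H)ˣ using htu
  have h1t : (t:H→L[ℂ]H) * ↑t⁻¹ = 1 := Units.mul_inv t
  have h2t : (↑t⁻¹:H→L[ℂ]H) * ↑t = 1 := Units.inv_mul t
  have hF0 : 0 ≤ cfc f c := cfc_nonneg fun x hx => (hfpos x hx).le
  have hG0 : 0 ≤ cfc g c := cfc_nonneg fun x hx => (hgpos x hx).le
  have hfg_cont : ContinuousOn (fun x => Real.sqrt (f x * g x)) (spectrum ℝ c) :=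
    Real.continuous_sqrt.comp_continuousOn (hf.mul hg)
  have hfinv_cont : ContinuousOn (fun x => (f x)⁻¹) (spectrum ℝ c) :=
    hf.inv₀ fun x hx => (hfpos x hx).ne'
  have hS0 : 0 ≤ cfc (fun x => Real.sqrt (f x * g x)) c :=
    cfc_nonneg fun x hx => Real.sqrt_nonneg _
  -- a := t F t etc.
  have ha0 : 0 ≤ (t:H→L[ℂ]H) * cfc f c * ↑t := by
    have := star_left_conjugate_nonneg hF0 (t:H→L[ℂ]H); rwa [hts] at this
  have hb0 : 0 ≤ (t:H→L[ℂ]H) * cfc g c * ↑t := by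
    have := star_left_conjugate_nonneg hG0 (t:H→L[ℂ]H); rwa [hts] at this
  have hg0' : 0 ≤ (t:H→L[ℂ]H) * cfc (fun x => Real.sqrt (f x * g x)) c * ↑t := by
    have := star_left_conjugate_nonneg hS0 (t:H→L[ℂ]H); rwa [hts] at this
  have hFu : IsUnit (cfc f c) :=
    isUnit_cfc_iff f c hf (IsSelfAdjoint.of_nonneg hc) |>.mpr fun x hx => (hfpos x hx).ne'
  have hau : IsUnit ((t:H→L[ℂ]H) * cfc f c * ↑t) := (t.isUnit.mul hFu).mul t.isUnit
  -- inverse of a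
  have hinv_mul : ((↑t⁻¹:H→L[ℂ]H) * cfc (fun x => (f x)⁻¹) c * ↑t⁻¹) * (↑t * cfc f c * ↑t) = 1 := by
    rw [conj2 h2t]
    have : cfc (fun x => (f x)⁻¹) c * cfc f c = 1 := by
      rw [← cfc_mul _ _ c hfinv_cont hf]
      have : ∀ x ∈ spectrum ℝ c, (f x)⁻¹ * f x = 1 := fun x hx =>
        inv_mul_cancel₀ (hfpos x hx).ne'
      rw [cfc_congr this, cfc_const_one ℝ c]
    rw [this, mul_one, h2t]
  -- main product identity
  have hgig : ((t:H→L[ℂ]H) * cfc (fun x => Real.sqrt (f x * g x)) c * ↑t)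
      * ((↑t⁻¹:H→L[ℂ]H) * cfc (fun x => (f x)⁻¹) c * ↑t⁻¹)
      * ((t:H→L[ℂ]H) * cfc (fun x => Real.sqrt (f x * g x)) c * ↑t)
      = (t:H→L[ℂ]H) * cfc g c * ↑t := by
    rw [conj3 h1t h2t]
    congr 1
    · congr 1
      rw [← cfc_mul _ _ c hfg_cont hfinv_cont,
        ← cfc_mul (fun x => Real.sqrt (f x * g x) * (f x)⁻¹) _ c ((hfg_cont.mul hfinv_cont)) hfg_cont]
      refine cfc_congr fun x hx => ?_
      have hfx := hfpos x hx
      have hgx := hgpos x hx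
      have hs : Real.sqrt (f x * g x) * Real.sqrt (f x * g x) = f x * g x :=
        Real.mul_self_sqrt (mul_nonneg hfx.le hgx.le)
      have e : Real.sqrt (f x * g x) * (f x)⁻¹ * Real.sqrt (f x * g x)
          = (Real.sqrt (f x * g x) * Real.sqrt (f x * g x)) * (f x)⁻¹ := by ring
      rw [e, hs, mul_comm (f x) (g x), mul_assoc, mul_inv_cancel₀ hfx.ne', mul_one]
  exact geomMean_unique ha0 hau hb0 hg0' hinv_mul hgig


section Scalar
variable {m M α x : ℝ}


/-- chord of `t ↦ t^α` on `[m,M]`, evaluated at `x`, equals `λ m^α + (1-λ) M^α`. -/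
lemma chord_eq (hm : 0 < m) (hmM : m < M) (α x : ℝ) :
    (M*m^α - m*M^α)/(M-m) + (M^α - m^α)/(M-m) * x
      = ((M-x)/(M-m)) * m^α + ((x-m)/(M-m)) * M^α := by
  have h : M - m ≠ 0 := by linarith
  field_simp
  ring

lemma lam_mem (hmM : m < M) (hxm : m ≤ x) (hxM : x ≤ M) :
    0 ≤ (M-x)/(M-m) ∧ 0 ≤ (x-m)/(M-m) ∧ (M-x)/(M-m) + (x-m)/(M-m) = 1 := by
  have h : (0:ℝ) < M - m := by linarith
  refine ⟨div_nonneg (by linarith) h.le, div_nonneg (by linarith) h.le, ?_⟩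
  field_simp
  ring

lemma chord_le_rpow (hm : 0 < m) (hmM : m < M) (hα : 0 ≤ α) (hα1 : α ≤ 1)
    (hxm : m ≤ x) (hxM : x ≤ M) :
    (M*m^α - m*M^α)/(M-m) + (M^α - m^α)/(M-m) * x ≤ x ^ α := by
  obtain ⟨hl0, hl1, hsum⟩ := lam_mem hmM hxm hxM
  rw [chord_eq hm hmM]
  have hx_eq : ((M-x)/(M-m)) * m + ((x-m)/(M-m)) * M = x := by
    have h : M - m ≠ 0 := by linarith
    field_simp
    ring
  have := (Real.concaveOn_rpow hα hα1).2 (Set.mem_Ici.mpr hm.le)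
    (Set.mem_Ici.mpr (by linarith : (0:ℝ) ≤ M)) hl0 hl1 hsum
  simpa [smul_eq_mul, hx_eq] using this

lemma chord_pos (hm : 0 < m) (hmM : m < M) (hα : 0 ≤ α)
    (hxm : m ≤ x) (hxM : x ≤ M) :
    0 < (M*m^α - m*M^α)/(M-m) + (M^α - m^α)/(M-m) * x := by
  obtain ⟨hl0, hl1, hsum⟩ := lam_mem hmM hxm hxM
  rw [chord_eq hm hmM]
  have h1 : 0 < m ^ α := Real.rpow_pos_of_pos hm α
  have h2 : m ^ α ≤ M ^ α := Real.rpow_le_rpow hm.le (by linarith) hα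
  nlinarith

lemma key_scalar (hm : 0 < m) (hmM : m < M) (hα : 0 ≤ α) (hα1 : α ≤ 1)
    (hxm : m ≤ x) (hxM : x ≤ M) :
    (2 * (M*m) ^ ((1:ℝ)/4) / (Real.sqrt M + Real.sqrt m)) * x ^ ((1:ℝ)/2)
      ≤ Real.sqrt (((M*m^α - m*M^α)/(M-m) + (M^α - m^α)/(M-m) * x)
          * ((M*m^(1-α) - m*M^(1-α))/(M-m) + (M^(1-α) - m^(1-α))/(M-m) * x)) := by
  obtain ⟨hl0, hl1, hsum⟩ := lam_mem hmM hxm hxM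
  set l := (M-x)/(M-m) with hl
  set u := Real.sqrt m with hu
  set v := Real.sqrt M with hv
  have hx0 : 0 < x := lt_of_lt_of_le hm hxm
  have hM0 : 0 < M := lt_trans hm hmM
  have hu0 : 0 < u := Real.sqrt_pos.mpr hm
  have hv0 : 0 < v := Real.sqrt_pos.mpr hM0
  have huu : u * u = m := Real.mul_self_sqrt hm.le
  have hvv : v * v = M := Real.mul_self_sqrt hM0.le
  -- the two chords
  rw [chord_eq hm hmM α x, chord_eq hm hmM (1-α) x]
  have h1m : (x-m)/(M-m) = 1 - l := by rw [hl] at hsum ⊢; linarith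
  rw [h1m]
  -- rpow products
  have hmm : m ^ α * m ^ (1-α) = m := by
    rw [← Real.rpow_add hm]; norm_num
  have hMM : M ^ α * M ^ (1-α) = M := by
    rw [← Real.rpow_add hM0]; norm_num
  have hcross : m ^ α * M ^ (1-α) * (M ^ α * m ^ (1-α)) = m * M := by
    rw [show m ^ α * M ^ (1-α) * (M ^ α * m ^ (1-α))
      = (m ^ α * m ^ (1-α)) * (M ^ α * M ^ (1-α)) by ring, hmm, hMM]
  have ha0 : 0 < m ^ α * M ^ (1-α) :=
    mul_pos (Real.rpow_pos_of_pos hm _) (Real.rpow_pos_of_pos hM0 _)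
  have hb0 : 0 < M ^ α * m ^ (1-α) :=
    mul_pos (Real.rpow_pos_of_pos hM0 _) (Real.rpow_pos_of_pos hm _)
  -- AM-GM for the cross term
  have hcross_ge : m ^ α * M ^ (1-α) + M ^ α * m ^ (1-α) ≥ 2 * (u * v) := by
    have h1 : Real.sqrt (m ^ α * M ^ (1-α)) * Real.sqrt (M ^ α * m ^ (1-α))
        = Real.sqrt (m * M) := by
      rw [← Real.sqrt_mul ha0.le, hcross]
    have h2 : Real.sqrt (m * M) = u * v := by
      rw [hu, hv, Real.sqrt_mul hm.le]
    have h3 := Real.mul_self_sqrt ha0.le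
    have h4 := Real.mul_self_sqrt hb0.le
    nlinarith [sq_nonneg (Real.sqrt (m ^ α * M ^ (1-α)) - Real.sqrt (M ^ α * m ^ (1-α)))]
  -- product of chords ≥ (l u + (1-l) v)^2
  have hprod_ge : (l * m ^ α + (1-l) * M ^ α) * (l * m ^ (1-α) + (1-l) * M ^ (1-α))
      ≥ (l * u + (1-l) * v)^2 := by
    have hexp : (l * m ^ α + (1-l) * M ^ α) * (l * m ^ (1-α) + (1-l) * M ^ (1-α))
        = l^2 * m + (1-l)^2 * M + l * (1-l) * (m ^ α * M ^ (1-α) + M ^ α * m ^ (1-α)) := by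
      rw [show (l * m ^ α + (1-l) * M ^ α) * (l * m ^ (1-α) + (1-l) * M ^ (1-α))
        = l^2 * (m ^ α * m ^ (1-α)) + (1-l)^2 * (M ^ α * M ^ (1-α))
          + l * (1-l) * (m ^ α * M ^ (1-α) + M ^ α * m ^ (1-α)) by ring, hmm, hMM]
    have hll : 0 ≤ l * (1-l) := mul_nonneg hl0 (by rw [← h1m]; exact hl1)
    nlinarith [hll, hcross_ge]
  -- y = l u + (1-l) v = (uv + x)/(u+v)
  have hxid : x = l * m + (1-l) * M := by
    rw [hl]; have h : M - m ≠ 0 := by linarith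
    field_simp; ring
  have hy_id : (l * u + (1-l) * v) * (u + v) = u*v + x := by
    rw [hxid, ← huu, ← hvv]; ring
  have hw : (M*m) ^ ((1:ℝ)/4) * (M*m) ^ ((1:ℝ)/4) = u * v := by
    rw [← Real.rpow_add (mul_pos hM0 hm)]
    norm_num
    rw [show ((1:ℝ)/2) = (1/2 : ℝ) by norm_num, ← Real.sqrt_eq_rpow,
      Real.sqrt_mul hM0.le, hu, hv, mul_comm]
  set w := (M*m) ^ ((1:ℝ)/4) with hwdef
  have hw0 : 0 < w := Real.rpow_pos_of_pos (mul_pos hM0 hm) _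
  have hsx : Real.sqrt x * Real.sqrt x = x := Real.mul_self_sqrt hx0.le
  have hsx0 : 0 ≤ Real.sqrt x := Real.sqrt_nonneg x
  -- 2 w sqrt x ≤ uv + x
  have hkey : 2 * w * Real.sqrt x ≤ u*v + x := by
    nlinarith [sq_nonneg (w - Real.sqrt x), hw]
  -- hence (2w/(u+v)) sqrt x ≤ y
  have hy0 : 0 ≤ l * u + (1-l) * v := by nlinarith [hl0, hu0.le, hv0.le, h1m ▸ hl1]
  have huv0 : 0 < u + v := by linarith
  have hstep : (2 * w / (u + v)) * Real.sqrt x ≤ l * u + (1-l) * v := by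
    rw [div_mul_eq_mul_div, div_le_iff₀ huv0, hy_id]
    calc 2 * w * Real.sqrt x ≤ u*v + x := hkey
      _ = _ := rfl
  -- conclude via sqrt monotone
  have hfinal : l * u + (1-l) * v
      ≤ Real.sqrt ((l * m ^ α + (1-l) * M ^ α) * (l * m ^ (1-α) + (1-l) * M ^ (1-α))) := by
    rw [show l * u + (1-l) * v = Real.sqrt ((l * u + (1-l) * v)^2) from
      (Real.sqrt_sq hy0).symm]
    exact Real.sqrt_le_sqrt hprod_ge
  have hxr : x ^ ((1:ℝ)/2) = Real.sqrt x := (Real.sqrt_eq_rpow x).symm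
  rw [hxr, show v + u = u + v from add_comm v u]
  exact le_trans hstep hfinal


end Scalar

/-! ### Linear lower bounds for `wgm` -/

variable {m M α : ℝ}

lemma algebraMap_eq_smul_one' (r : ℝ) : algebraMap ℝ (H →L[ℂ] H) r = r • 1 :=
  Algebra.algebraMap_eq_smul_one r

lemma isq_a_isq (ha : 0 ≤ a) (hau : IsUnit a) : isq a * a * isq a = 1 := by
  have h := opRpow_half_mul_half ha
  calc isq a * a * isq a = isq a * (sq a * sq a) * isq a := by rw [h]
    _ = (isq a * sq a) * (sq a * isq a) := by noncomm_ring
    _ = 1 := by rw [isq_mul_sq ha hau, sq_mul_isq ha hau, one_mul]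

lemma spectrum_cc_subset (ha : 0 ≤ a) (hau : IsUnit a) (hb : 0 ≤ b)
    (h1 : m • a ≤ b) (h2 : b ≤ M • a) :
    ∀ x ∈ spectrum ℝ (cc a b), m ≤ x ∧ x ≤ M := by
  have hsa : IsSelfAdjoint (cc a b) := .of_nonneg (cc_nonneg ha hb)
  have hsi := opRpow_star ha (-(1/2))
  have hlow : algebraMap ℝ (H →L[ℂ] H) m ≤ cc a b := by
    have hc := star_left_conjugate_le_conjugate h1 (isq a)
    rw [hsi] at hc
    have : isq a * (m • a) * isq a = m • (isq a * a * isq a) := by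
      rw [mul_smul_comm, smul_mul_assoc]
    rw [this, isq_a_isq ha hau] at hc
    rwa [algebraMap_eq_smul_one']
  have hhigh : cc a b ≤ algebraMap ℝ (H →L[ℂ] H) M := by
    have hc := star_left_conjugate_le_conjugate h2 (isq a)
    rw [hsi] at hc
    have : isq a * (M • a) * isq a = M • (isq a * a * isq a) := by
      rw [mul_smul_comm, smul_mul_assoc]
    rw [this, isq_a_isq ha hau] at hc
    rwa [algebraMap_eq_smul_one']
  intro x hx
  exact ⟨(algebraMap_le_iff_le_spectrum (R := ℝ) hsa).mp hlow x hx,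
    (le_algebraMap_iff_spectrum_le (R := ℝ) hsa).mp hhigh x hx⟩

lemma lin_conj (ha : 0 ≤ a) (hau : IsUnit a) (hb : 0 ≤ b) (p q : ℝ) :
    sq a * cfc (fun x : ℝ => p + q * x) (cc a b) * sq a = p • a + q • b := by
  have hc : 0 ≤ cc a b := cc_nonneg ha hb
  have hcfc : cfc (fun x : ℝ => p + q * x) (cc a b)
      = algebraMap ℝ (H →L[ℂ] H) p + q • cc a b := by
    rw [cfc_const_add p (fun x => q * x) (cc a b)
      ((continuous_const.mul continuous_id).continuousOn),
      cfc_const_mul_id q (cc a b)]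
  rw [hcfc, algebraMap_eq_smul_one']
  rw [mul_add, add_mul, mul_smul_comm, smul_mul_assoc, mul_one,
    mul_smul_comm, smul_mul_assoc, opRpow_half_mul_half ha, sq_cc_sq ha hau hb]

lemma wgm_nonneg (ha : 0 ≤ a) (hb : 0 ≤ b) (μ : ℝ) : 0 ≤ wgm μ a b := by
  rw [wgm_eq]
  have h := star_right_conjugate_nonneg (opRpow_nonneg (cc_nonneg ha hb) μ) (sq a)
  rwa [opRpow_star ha] at h

lemma wgm_ge_lin (hm : 0 < m) (hmM : m < M) (hα : 0 ≤ α) (hα1 : α ≤ 1)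
    (ha : 0 ≤ a) (hau : IsUnit a) (hb : 0 ≤ b)
    (h1 : m • a ≤ b) (h2 : b ≤ M • a) :
    ((M*m^α - m*M^α)/(M-m)) • a + ((M^α - m^α)/(M-m)) • b ≤ wgm α a b := by
  have hspec := spectrum_cc_subset ha hau hb h1 h2
  have hc : 0 ≤ cc a b := cc_nonneg ha hb
  have hne : ∀ x ∈ spectrum ℝ (cc a b), x ≠ 0 := fun x hx =>
    (lt_of_lt_of_le hm (hspec x hx).1).ne'
  have hmono : cfc (fun x : ℝ => (M*m^α - m*M^α)/(M-m) + (M^α - m^α)/(M-m) * x) (cc a b)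
      ≤ cfc (fun x : ℝ => x ^ α) (cc a b) := by
    refine cfc_mono (fun x hx => chord_le_rpow hm hmM hα hα1 (hspec x hx).1 (hspec x hx).2)
      ((continuous_const.add (continuous_const.mul continuous_id)).continuousOn)
      (rpowContOn α hne)
  rw [← lin_conj ha hau hb, wgm_eq]
  have h := star_left_conjugate_le_conjugate hmono (sq a)
  rwa [opRpow_star ha] at h

end RCal

namespace RCal

lemma opRpow_zero_base [Nontrivial H] {r : ℝ} (hr : r ≠ 0) :
    opRpow (0 : H →L[ℂ] H) r = 0 := by
  have hnt : Nontrivial (H →L[ℂ] H) := ⟨1, 0, one_ne_zero⟩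
  unfold opRpow
  have hspec : spectrum ℝ (0 : H →L[ℂ] H) = {0} := spectrum.zero_eq (𝕜 := ℝ)
  have : ∀ x ∈ spectrum ℝ (0 : H →L[ℂ] H), x ^ r = (0:ℝ) := by
    intro x hx
    rw [hspec] at hx
    simp only [Set.mem_singleton_iff] at hx
    rw [hx, Real.zero_rpow hr]
  rw [cfc_congr this, cfc_const 0 (0 : H →L[ℂ] H), map_zero]

lemma geomMean_zero [Nontrivial H] : geomMean (0 : H →L[ℂ] H) 0 = 0 := by
  rw [geomMean_eq]
  have h : sq (0 : H →L[ℂ] H) = 0 := opRpow_zero_base (by norm_num)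
  rw [h, zero_mul, zero_mul]

end RCal


open RCal in
/-- `((√M + √m)/(2(Mm)^{1/4})) · [(Σ A_j ♯_α B_j) ♯ (Σ A_j ♯_{1−α} B_j)] ≥ (Σ A_j) ♯ (Σ B_j)`
whenever `0 < mA_j ≤ B_j ≤ MA_j` and `α ∈ [0,1]`. -/
theorem reverse_callebaut_right
    (m M : ℝ) (hm : 0 < m) (hmM : m < M)
    (α : ℝ) (hα : α ∈ Set.Icc (0 : ℝ) 1)
    (n : ℕ) (A B : Fin n → (H →L[ℂ] H))
    (hA : ∀ j, 0 ≤ A j) (hAu : ∀ j, IsUnit (A j))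
    (hB : ∀ j, 0 ≤ B j) (hBu : ∀ j, IsUnit (B j))
    (h1 : ∀ j, m • A j ≤ B j) (h2 : ∀ j, B j ≤ M • A j) :
    geomMean (∑ j, A j) (∑ j, B j) ≤
      ((Real.sqrt M + Real.sqrt m) / (2 * (M * m) ^ ((1 : ℝ)/4))) •
        geomMean (∑ j, wgm α (A j) (B j)) (∑ j, wgm (1 - α) (A j) (B j)) := by
  obtain ⟨hα0, hα1⟩ := hα
  have hM0 : 0 < M := lt_trans hm hmM
  rcases subsingleton_or_nontrivial H with hH | hH
  · have : Subsingleton (H →L[ℂ] H) := ⟨fun f g => ContinuousLinearMap.ext fun x =>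
      Subsingleton.elim _ _⟩
    exact le_of_eq (Subsingleton.elim _ _)
  -- constants
  set cst : ℝ := (Real.sqrt M + Real.sqrt m) / (2 * (M * m) ^ ((1 : ℝ)/4)) with hcst
  set cstinv : ℝ := 2 * (M * m) ^ ((1 : ℝ)/4) / (Real.sqrt M + Real.sqrt m) with hcstinv
  have hw0 : 0 < (M * m) ^ ((1:ℝ)/4) := Real.rpow_pos_of_pos (mul_pos hM0 hm) _
  have hsm0 : 0 < Real.sqrt M + Real.sqrt m := by
    have := Real.sqrt_pos.mpr hM0
    have := Real.sqrt_nonneg m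
    linarith
  have hcst0 : 0 < cst := div_pos hsm0 (by linarith)
  have hcstinv0 : 0 < cstinv := div_pos (by linarith) hsm0
  have hmulinv : cst * cstinv = 1 := by
    rw [hcst, hcstinv]
    field_simp
  rcases Nat.eq_zero_or_pos n with hn | hn
  · subst hn
    simp only [Finset.univ_eq_empty, Finset.sum_empty]
    rw [geomMean_zero, smul_zero]
  -- nontrivial case
  set SA := ∑ j, A j with hSA
  set SB := ∑ j, B j with hSB
  set X := ∑ j, wgm α (A j) (B j) with hX
  set Y := ∑ j, wgm (1-α) (A j) (B j) with hY
  have hSA0 : 0 ≤ SA := Finset.sum_nonneg fun j _ => hA j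
  have hSB0 : 0 ≤ SB := Finset.sum_nonneg fun j _ => hB j
  have j0 : Fin n := ⟨0, hn⟩
  have hSAu : IsUnit SA := CStarAlgebra.isUnit_of_le (A j0)
    (Finset.single_le_sum (fun j _ => hA j) (Finset.mem_univ j0)) ((hAu j0).isStrictlyPositive (hA j0))
  have hmSA : m • SA ≤ SB := by
    rw [hSA, hSB, Finset.smul_sum]
    exact Finset.sum_le_sum fun j _ => h1 j
  have hMSA : SB ≤ M • SA := by
    rw [hSA, hSB, Finset.smul_sum]
    exact Finset.sum_le_sum fun j _ => h2 j
  -- the conjugating element and central operator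
  set t := RCal.sq SA with ht
  set c := cc SA SB with hc
  have hts : star t = t := opRpow_star hSA0 _
  have ht0 : 0 ≤ t := opRpow_nonneg hSA0 _
  have htu : IsUnit t := opRpow_isUnit hSA0 hSAu _
  have hc0 : 0 ≤ c := cc_nonneg hSA0 hSB0
  have hcsa : IsSelfAdjoint c := .of_nonneg hc0
  have hspec : ∀ x ∈ spectrum ℝ c, m ≤ x ∧ x ≤ M :=
    spectrum_cc_subset hSA0 hSAu hSB0 hmSA hMSA
  -- chord functions
  set f : ℝ → ℝ := fun x => (M*m^α - m*M^α)/(M-m) + (M^α - m^α)/(M-m) * x with hf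
  set g : ℝ → ℝ := fun x => (M*m^(1-α) - m*M^(1-α))/(M-m) + (M^(1-α) - m^(1-α))/(M-m) * x
    with hg
  have hf_cont : ContinuousOn f (spectrum ℝ c) :=
    (continuous_const.add (continuous_const.mul continuous_id)).continuousOn
  have hg_cont : ContinuousOn g (spectrum ℝ c) :=
    (continuous_const.add (continuous_const.mul continuous_id)).continuousOn
  have hfpos : ∀ x ∈ spectrum ℝ c, 0 < f x := fun x hx =>
    chord_pos hm hmM hα0 (hspec x hx).1 (hspec x hx).2
  have hgpos : ∀ x ∈ spectrum ℝ c, 0 < g x := fun x hx =>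
    chord_pos hm hmM (by linarith) (hspec x hx).1 (hspec x hx).2
  -- X0 and Y0
  set X0 := t * cfc f c * t with hX0
  set Y0 := t * cfc g c * t with hY0
  have hcfcf0 : 0 ≤ cfc f c := cfc_nonneg fun x hx => (hfpos x hx).le
  have hcfcg0 : 0 ≤ cfc g c := cfc_nonneg fun x hx => (hgpos x hx).le
  have hX0n : 0 ≤ X0 := by
    have := star_left_conjugate_nonneg hcfcf0 t; rwa [hts] at this
  have hY0n : 0 ≤ Y0 := by
    have := star_left_conjugate_nonneg hcfcg0 t; rwa [hts] at this
  have hX0u : IsUnit X0 := (htu.mul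
    ((isUnit_cfc_iff f c hf_cont hcsa).mpr fun x hx => (hfpos x hx).ne')).mul htu
  have hY0u : IsUnit Y0 := (htu.mul
    ((isUnit_cfc_iff g c hg_cont hcsa).mpr fun x hx => (hgpos x hx).ne')).mul htu
  -- X0 ≤ X, Y0 ≤ Y
  have hX0eq : X0 = ((M*m^α - m*M^α)/(M-m)) • SA + ((M^α - m^α)/(M-m)) • SB :=
    lin_conj hSA0 hSAu hSB0 _ _
  have hY0eq : Y0 = ((M*m^(1-α) - m*M^(1-α))/(M-m)) • SA + ((M^(1-α) - m^(1-α))/(M-m)) • SB :=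
    lin_conj hSA0 hSAu hSB0 _ _
  have hX0X : X0 ≤ X := by
    rw [hX0eq, hSA, hSB, Finset.smul_sum, Finset.smul_sum, ← Finset.sum_add_distrib]
    exact Finset.sum_le_sum fun j _ =>
      wgm_ge_lin hm hmM hα0 hα1 (hA j) (hAu j) (hB j) (h1 j) (h2 j)
  have hY0Y : Y0 ≤ Y := by
    rw [hY0eq, hSA, hSB, Finset.smul_sum, Finset.smul_sum, ← Finset.sum_add_distrib]
    exact Finset.sum_le_sum fun j _ =>
      wgm_ge_lin hm hmM (by linarith) (by linarith) (hA j) (hAu j) (hB j) (h1 j) (h2 j)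
  have hXn : 0 ≤ X := Finset.sum_nonneg fun j _ => wgm_nonneg (hA j) (hB j) α
  have hYn : 0 ≤ Y := Finset.sum_nonneg fun j _ => wgm_nonneg (hA j) (hB j) (1-α)
  have hXu : IsUnit X := CStarAlgebra.isUnit_of_le X0 hX0X (hX0u.isStrictlyPositive hX0n)
  have hYu : IsUnit Y := CStarAlgebra.isUnit_of_le Y0 hY0Y (hY0u.isStrictlyPositive hY0n)
  -- step 1 : commuting geometric mean
  have step1 : geomMean X0 Y0 = t * cfc (fun x => Real.sqrt (f x * g x)) c * t :=
    geomMean_conj_cfc hc0 ht0 htu hf_cont hg_cont hfpos hgpos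
  -- step 2 : lower bound for the commuting geometric mean
  have hhalf_cont : ContinuousOn (fun x : ℝ => x ^ ((1:ℝ)/2)) (spectrum ℝ c) :=
    rpowContOn' (by norm_num) _
  have hsqrtfg_cont : ContinuousOn (fun x => Real.sqrt (f x * g x)) (spectrum ℝ c) :=
    Real.continuous_sqrt.comp_continuousOn (hf_cont.mul hg_cont)
  have hcfc_le : cfc (fun x : ℝ => cstinv * x ^ ((1:ℝ)/2)) c
      ≤ cfc (fun x => Real.sqrt (f x * g x)) c := by
    refine cfc_mono (fun x hx => ?_) (continuousOn_const.mul hhalf_cont) hsqrtfg_cont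
    exact key_scalar hm hmM hα0 hα1 (hspec x hx).1 (hspec x hx).2
  have hsmul_eq : cstinv • geomMean SA SB = t * cfc (fun x : ℝ => cstinv * x ^ ((1:ℝ)/2)) c * t := by
    rw [geomMean_eq]
    rw [cfc_const_mul cstinv (fun x : ℝ => x ^ ((1:ℝ)/2)) c hhalf_cont]
    rw [mul_smul_comm, smul_mul_assoc]
    rfl
  have step2 : cstinv • geomMean SA SB ≤ t * cfc (fun x => Real.sqrt (f x * g x)) c * t := by
    rw [hsmul_eq]
    have := star_left_conjugate_le_conjugate hcfc_le t
    rwa [hts] at this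
  -- step 3 : monotonicity
  have step3 : geomMean X0 Y0 ≤ geomMean X Y := by
    calc geomMean X0 Y0 ≤ geomMean X0 Y :=
          geomMean_mono_right hX0n hX0u hY0n hYn hYu hY0Y
      _ = geomMean Y X0 := geomMean_symm hX0n hX0u hYn hYu
      _ ≤ geomMean Y X := geomMean_mono_right hYn hYu hX0n hXn hXu hX0X
      _ = geomMean X Y := (geomMean_symm hXn hXu hYn hYu).symm
  -- conclude
  have main : cstinv • geomMean SA SB ≤ geomMean X Y := by
    calc cstinv • geomMean SA SB ≤ t * cfc (fun x => Real.sqrt (f x * g x)) c * t := step2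
      _ = geomMean X0 Y0 := step1.symm
      _ ≤ geomMean X Y := step3
  calc geomMean SA SB = cst • (cstinv • geomMean SA SB) := by
        rw [smul_smul, hmulinv, one_smul]
    _ ≤ cst • geomMean X Y := smul_le_smul_of_nonneg_left main hcst0.le
end
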